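/- Let F* = {ω̃, ω̃*} ∪ {L̃_n : n ≥ 2}, where L̃_n is the n-element chain together with infinitely many elements pairwise incomparable and incomparable to the chain, ω̃ is a chain of order type ω with infinitely many such incomparable elements added, and ω̃* is a chain of order type ω* with infinitely many such incomparable elements added. Then F* is PL-learnable but not E_3-learnable: some learner PL-learns F*, but there is no map Γ from structures to ℕ → (ℕ → ℕ), continuous on LD(F*), such that for all R, R' ∈ LD(F*), R ≅ R' iff Γ R E_3 Γ R'. -/

import Mathlib

/-- A structure on domain ℕ: a binary relation given as a map to `Bool`. -/
abbrev Struc := ℕ → ℕ → Bool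

/-- The restrictions of `R` and `R'` to `{0,…,s} × {0,…,s}` agree. -/
def restrEq (R R' : Struc) (s : ℕ) : Prop :=
  ∀ x ≤ s, ∀ y ≤ s, R x y = R' x y

/-- `R` and `R'` are isomorphic structures. -/
def Isom (R R' : Struc) : Prop :=
  ∃ e : ℕ ≃ ℕ, ∀ x y, R' (e x) (e y) = R x y

/-- `R↾s` embeds into `R'`: there is a map injective on `{0,…,s}` preserving the relation. -/
def EmbedsRestr (R : Struc) (s : ℕ) (R' : Struc) : Prop :=
  ∃ h : ℕ → ℕ, (∀ x ≤ s, ∀ y ≤ s, h x = h y → x = y) ∧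
    (∀ x ≤ s, ∀ y ≤ s, R' (h x) (h y) = R x y)

/-- The learning domain of a family: all isomorphic copies of members of the family. -/
def LD {I : Type} (A : I → Struc) : Set Struc := {R | ∃ i, Isom R (A i)}

/-- A learner: its conjecture at stage `s` depends only on `R↾s`. -/
def IsLearner {I : Type} (M : Struc → ℕ → Option I) : Prop :=
  ∀ R R' s, restrEq R R' s → M R s = M R' s

/-- `M` Ex-learns the family `A`. -/
def ExLearns {I : Type} (A : I → Struc) (M : Struc → ℕ → Option I) : Prop :=
  ∀ R i, Isom R (A i) → ∃ s₀, ∀ s ≥ s₀, M R s = some i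

/-- `M` Fin-learns the family `A`. -/
def FinLearns {I : Type} (A : I → Struc) (M : Struc → ℕ → Option I) : Prop :=
  ∀ R i, Isom R (A i) →
    ∃ s₀, (∀ s < s₀, M R s = none) ∧ (∀ s ≥ s₀, M R s = some i)

/-- `M` co-learns the family `A`. -/
def CoLearns {I : Type} (A : I → Struc) (M : Struc → ℕ → Option I) : Prop :=
  ∀ R i, Isom R (A i) → ∀ j, (∃ s, M R s = some j) ↔ j ≠ i

/-- `M` nUs-learns the family `A`: it Ex-learns it and never abandons the correct conjecture. -/
def NUsLearns {I : Type} (A : I → Struc) (M : Struc → ℕ → Option I) : Prop :=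
  ExLearns A M ∧
    ∀ R i, Isom R (A i) → ∀ s, M R s = some i → ∀ t ≥ s, M R t = some i

/-- `M` Dec-learns the family `A`: it Ex-learns it and never repeats an abandoned conjecture. -/
def DecLearns {I : Type} (A : I → Struc) (M : Struc → ℕ → Option I) : Prop :=
  ExLearns A M ∧
    ∀ R ∈ LD A, ∀ (j : I) (s : ℕ), M R s = some j → M R (s + 1) ≠ some j →
      ∀ t > s, M R t ≠ some j

/-- `M` PL-learns the family `A`: the unique conjecture output infinitely often is correct. -/
def PLLearns {I : Type} (A : I → Struc) (M : Struc → ℕ → Option I) : Prop :=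
  ∀ R ∈ LD A, ∀ i, {s | M R s = some i}.Infinite ↔ Isom R (A i)

/-- The relation `E₀` on Baire space: eventual agreement. -/
def E0 (p q : ℕ → ℕ) : Prop := ∃ m, ∀ n ≥ m, p n = q n

/-- The relation `E₃` on `ℕ → (ℕ → ℕ)`: columnwise `E₀`. -/
def E3 (p q : ℕ → ℕ → ℕ) : Prop := ∀ m, E0 (p m) (q m)

/-- The relation `E_range` on Baire space: equality of ranges. -/
def Erange (p q : ℕ → ℕ) : Prop := Set.range p = Set.range q

/-- `ω̃`: a chain of order type ω (on the even numbers) together with infinitely many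
elements pairwise incomparable and incomparable to the chain (the odd numbers). -/
def tildeOmega : Struc := fun x y =>
  decide (x = y ∨ (x % 2 = 0 ∧ y % 2 = 0 ∧ x ≤ y))

/-- `ω̃*`: a chain of order type ω* (on the even numbers) together with infinitely many
elements pairwise incomparable and incomparable to the chain (the odd numbers). -/
def tildeOmegaStar : Struc := fun x y =>
  decide (x = y ∨ (x % 2 = 0 ∧ y % 2 = 0 ∧ y ≤ x))

/-- `L̃_n`: the `n`-element chain `{0,…,n−1}` together with infinitely many further
elements pairwise incomparable and incomparable to the chain. -/
def tildeChain (n : ℕ) : Struc := fun x y => decide (x = y ∨ (x ≤ y ∧ y < n))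

/-- The family `F* = {ω̃, ω̃*} ∪ {L̃_n : n ≥ 2}`. -/
def Fstar : ℕ → Struc
  | 0 => tildeOmega
  | 1 => tildeOmegaStar
  | k + 2 => tildeChain (k + 2)


/-! ### Auxiliary development -/

section Aux

open Classical in
/-- Basic facts -/
lemma isom_refl (R : Struc) : Isom R R := ⟨Equiv.refl ℕ, fun _ _ => rfl⟩

lemma isom_symm {R R' : Struc} (h : Isom R R') : Isom R' R := by
  obtain ⟨e, he⟩ := h
  refine ⟨e.symm, fun x y => ?_⟩
  have := he (e.symm x) (e.symm y)
  simpa using this.symm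

lemma isom_trans {R S T : Struc} (h : Isom R S) (h' : Isom S T) : Isom R T := by
  obtain ⟨e, he⟩ := h; obtain ⟨f, hf⟩ := h'
  refine ⟨e.trans f, fun x y => ?_⟩
  simp only [Equiv.trans_apply]
  rw [hf, he]

lemma tildeOmega_iff (x y : ℕ) :
    tildeOmega x y = true ↔ (x = y ∨ (Even x ∧ Even y ∧ x ≤ y)) := by
  simp [tildeOmega, Nat.even_iff]

lemma tildeOmegaStar_iff (x y : ℕ) :
    tildeOmegaStar x y = true ↔ (x = y ∨ (Even x ∧ Even y ∧ y ≤ x)) := by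
  simp [tildeOmegaStar, Nat.even_iff]

lemma tildeChain_iff (n x y : ℕ) :
    tildeChain n x y = true ↔ (x = y ∨ (x ≤ y ∧ y < n)) := by
  simp [tildeChain]

/-- Master isomorphism lemma: two structures that are "a chain indexed by a rank function
plus isolated points" with order-isomorphic chains and infinite sets of isolated points
are isomorphic. -/
lemma master_iso (R R' : Struc) (K K' : Set ℕ) (p p' : ℕ → ℕ)
    (hR : ∀ x y, R x y = true ↔ (x = y ∨ (x ∈ K ∧ y ∈ K ∧ p x ≤ p y)))
    (hR' : ∀ x y, R' x y = true ↔ (x = y ∨ (x ∈ K' ∧ y ∈ K' ∧ p' x ≤ p' y)))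
    (φ : ℕ → ℕ) (hφK : ∀ x ∈ K, φ x ∈ K') (hφinj : Set.InjOn φ K)
    (hφsurj : ∀ y ∈ K', ∃ x ∈ K, φ x = y)
    (hφord : ∀ x ∈ K, ∀ y ∈ K, (p' (φ x) ≤ p' (φ y) ↔ p x ≤ p y))
    (hKc : {x | x ∉ K}.Infinite) (hK'c : {x | x ∉ K'}.Infinite) : Isom R R' := by
  classical
  have hbij : Set.BijOn φ K K' := ⟨fun x hx => hφK x hx, hφinj, fun y hy => by
    obtain ⟨x, hx, hxy⟩ := hφsurj y hy; exact ⟨x, hx, hxy⟩⟩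
  let φ₀ : K ≃ K' := Set.BijOn.equiv φ hbij
  have hinf1 : Infinite ↥(Kᶜ) := Set.infinite_coe_iff.2 hKc
  have hinf2 : Infinite ↥(K'ᶜ) := Set.infinite_coe_iff.2 hK'c
  haveI := hinf1; haveI := hinf2
  haveI : Denumerable ↥(Kᶜ) := Nat.Subtype.denumerable _
  haveI : Denumerable ↥(K'ᶜ) := Nat.Subtype.denumerable _
  let ψ : ↥(Kᶜ) ≃ ↥(K'ᶜ) := (Denumerable.eqv _).trans (Denumerable.eqv _).symm
  let e : ℕ ≃ ℕ :=
    (Equiv.Set.sumCompl K).symm.trans ((Equiv.sumCongr φ₀ ψ).trans (Equiv.Set.sumCompl K'))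
  have he_mem : ∀ x (hx : x ∈ K), e x = φ x := by
    intro x hx
    simp only [e, Equiv.trans_apply, Equiv.Set.sumCompl_symm_apply_of_mem hx,
      Equiv.sumCongr_apply, Sum.map_inl, Equiv.Set.sumCompl_apply_inl]
    rfl
  have he_not : ∀ x, x ∉ K → e x ∉ K' := by
    intro x hx
    simp only [e, Equiv.trans_apply, Equiv.Set.sumCompl_symm_apply_of_notMem hx,
      Equiv.sumCongr_apply, Sum.map_inr, Equiv.Set.sumCompl_apply_inr]
    exact (ψ ⟨x, hx⟩).2
  refine ⟨e, fun x y => ?_⟩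
  have hiff : R' (e x) (e y) = true ↔ R x y = true := by
    rw [hR', hR]
    have hinj : e x = e y ↔ x = y := by
      constructor
      · exact fun h => e.injective h
      · rintro rfl; rfl
    rw [hinj]
    apply or_congr Iff.rfl
    constructor
    · rintro ⟨h1, h2, h3⟩
      have hx : x ∈ K := by by_contra hc; exact he_not x hc h1
      have hy : y ∈ K := by by_contra hc; exact he_not y hc h2
      refine ⟨hx, hy, ?_⟩
      rw [← hφord x hx y hy]
      rwa [he_mem x hx, he_mem y hy] at h3
    · rintro ⟨hx, hy, h3⟩
      rw [he_mem x hx, he_mem y hy]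
      exact ⟨hφK x hx, hφK y hy, (hφord x hx y hy).2 h3⟩
  cases h1 : R x y <;> cases h2 : R' (e x) (e y) <;> simp_all

/-! Invariants distinguishing the members of `F*`. -/

def compSet (R : Struc) : Set ℕ := {x | ∃ y, y ≠ x ∧ (R x y = true ∨ R y x = true)}

lemma compSet_eq {R R' : Struc} (e : ℕ ≃ ℕ) (he : ∀ x y, R' (e x) (e y) = R x y) :
    compSet R = e ⁻¹' compSet R' := by
  ext x
  simp only [compSet, Set.mem_setOf_eq, Set.mem_preimage]
  constructor
  · rintro ⟨y, hy, hor⟩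
    exact ⟨e y, fun hc => hy (e.injective hc), by rw [he, he]; exact hor⟩
  · rintro ⟨z, hz, hor⟩
    refine ⟨e.symm z, fun hc => hz (by rw [← hc]; simp), ?_⟩
    have h1 := he x (e.symm z)
    have h2 := he (e.symm z) x
    simp only [Equiv.apply_symm_apply] at h1 h2
    rw [← h1, ← h2]; exact hor

lemma isom_compSet_infinite {R R' : Struc} (h : Isom R R') :
    (compSet R).Infinite ↔ (compSet R').Infinite := by
  obtain ⟨e, he⟩ := h
  rw [compSet_eq e he]
  constructor
  · intro hi
    by_contra hfin
    rw [Set.not_infinite] at hfin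
    exact hi ((hfin.preimage (e.injective.injOn)))
  · intro hi
    exact hi.preimage (by rw [e.range_eq_univ]; exact Set.subset_univ _)

lemma isom_compSet_ncard {R R' : Struc} (h : Isom R R') :
    (compSet R).ncard = (compSet R').ncard := by
  obtain ⟨e, he⟩ := h
  rw [compSet_eq e he]
  have : e '' (e ⁻¹' compSet R') = compSet R' := by
    rw [Set.image_preimage_eq _ e.surjective]
  conv_rhs => rw [← this]
  rw [Set.ncard_image_of_injective _ e.injective]

lemma compSet_tildeOmega : compSet tildeOmega = {x | Even x} := by
  ext x
  simp only [compSet, Set.mem_setOf_eq]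
  constructor
  · rintro ⟨y, hy, hor⟩
    rcases hor with h | h
    · rcases (tildeOmega_iff x y).1 h with h' | h'
      · exact absurd h'.symm hy
      · exact h'.1
    · rcases (tildeOmega_iff y x).1 h with h' | h'
      · exact absurd h' hy
      · exact h'.2.1
  · intro hx
    refine ⟨x + 2, by omega, Or.inl ?_⟩
    rw [tildeOmega_iff]
    right
    exact ⟨hx, by rcases hx with ⟨m, hm⟩; exact ⟨m+1, by omega⟩, by omega⟩

lemma compSet_tildeOmegaStar : compSet tildeOmegaStar = {x | Even x} := by
  ext x
  simp only [compSet, Set.mem_setOf_eq]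
  constructor
  · rintro ⟨y, hy, hor⟩
    rcases hor with h | h
    · rcases (tildeOmegaStar_iff x y).1 h with h' | h'
      · exact absurd h'.symm hy
      · exact h'.1
    · rcases (tildeOmegaStar_iff y x).1 h with h' | h'
      · exact absurd h' hy
      · exact h'.2.1
  · intro hx
    refine ⟨x + 2, by omega, Or.inr ?_⟩
    rw [tildeOmegaStar_iff]
    right
    exact ⟨by rcases hx with ⟨m, hm⟩; exact ⟨m+1, by omega⟩, hx, by omega⟩

lemma compSet_tildeChain (n : ℕ) (hn : 2 ≤ n) : compSet (tildeChain n) = {x | x < n} := by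
  ext x
  simp only [compSet, Set.mem_setOf_eq]
  constructor
  · rintro ⟨y, hy, hor⟩
    rcases hor with h | h
    · rcases (tildeChain_iff n x y).1 h with h' | h'
      · exact absurd h'.symm hy
      · omega
    · rcases (tildeChain_iff n y x).1 h with h' | h'
      · exact absurd h' hy
      · omega
  · intro hx
    rcases Nat.eq_zero_or_pos x with h0 | h0
    · refine ⟨1, by omega, Or.inl ?_⟩
      rw [tildeChain_iff]; right; omega
    · refine ⟨0, by omega, Or.inr ?_⟩
      rw [tildeChain_iff]; right; omega

lemma evens_infinite : {x : ℕ | Even x}.Infinite := by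
  refine Set.infinite_of_injective_forall_mem (f := fun k : ℕ => 2 * k) ?_ ?_
  · intro a b hab; simp only [] at hab; omega
  · intro k; exact ⟨k, two_mul k⟩

lemma Iio_ncard (n : ℕ) : {x : ℕ | x < n}.ncard = n := by
  have : {x : ℕ | x < n} = ↑(Finset.Iio n) := by ext x; simp
  rw [this, Set.ncard_coe_finset, Nat.card_Iio]

def predSet (R : Struc) (y : ℕ) : Set ℕ := {x | x ≠ y ∧ R x y = true}

def Pinv (R : Struc) : Prop := ∃ y, (predSet R y).Infinite

lemma isom_Pinv {R R' : Struc} (h : Isom R R') (h' : Pinv R') : Pinv R := by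
  obtain ⟨e, he⟩ := h
  obtain ⟨y', hy'⟩ := h'
  refine ⟨e.symm y', ?_⟩
  have : predSet R (e.symm y') = e ⁻¹' predSet R' y' := by
    ext x
    simp only [predSet, Set.mem_setOf_eq, Set.mem_preimage]
    have h1 := he x (e.symm y')
    simp only [Equiv.apply_symm_apply] at h1
    constructor
    · rintro ⟨hne, hr⟩
      exact ⟨fun hc => hne (by rw [← hc]; simp), by rw [h1]; exact hr⟩
    · rintro ⟨hne, hr⟩
      exact ⟨fun hc => hne (by rw [hc]; simp), by rw [← h1]; exact hr⟩
  rw [this]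
  exact hy'.preimage (by rw [e.range_eq_univ]; exact Set.subset_univ _)

lemma Pinv_tildeOmegaStar : Pinv tildeOmegaStar := by
  refine ⟨0, ?_⟩
  refine Set.infinite_of_injective_forall_mem (f := fun k : ℕ => 2 * (k + 1)) ?_ ?_
  · intro a b hab; simp only [] at hab; omega
  · intro k
    refine ⟨show 2 * (k+1) ≠ 0 by omega, ?_⟩
    show tildeOmegaStar (2 * (k+1)) 0 = true
    rw [tildeOmegaStar_iff]
    right
    exact ⟨⟨k+1, by omega⟩, ⟨0, by omega⟩, by omega⟩

lemma not_Pinv_tildeOmega : ¬ Pinv tildeOmega := by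
  rintro ⟨y, hy⟩
  apply hy
  apply Set.Finite.subset (Set.finite_Iic y)
  intro x hx
  rcases hx with ⟨hne, hr⟩
  rcases (tildeOmega_iff x y).1 hr with h | h
  · exact absurd h hne
  · exact h.2.2

lemma not_Pinv_tildeChain (n : ℕ) : ¬ Pinv (tildeChain n) := by
  rintro ⟨y, hy⟩
  apply hy
  apply Set.Finite.subset (Set.finite_Iic y)
  intro x hx
  rcases hx with ⟨hne, hr⟩
  rcases (tildeChain_iff n x y).1 hr with h | h
  · exact absurd h hne
  · exact h.1

lemma noniso_omega_star : ¬ Isom tildeOmega tildeOmegaStar := by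
  intro h
  exact not_Pinv_tildeOmega (isom_Pinv h Pinv_tildeOmegaStar)

lemma noniso_omega_chain (n : ℕ) (hn : 2 ≤ n) : ¬ Isom tildeOmega (tildeChain n) := by
  intro h
  have := (isom_compSet_infinite h).1 (by rw [compSet_tildeOmega]; exact evens_infinite)
  rw [compSet_tildeChain n hn] at this
  exact this (Set.finite_Iio n)

lemma noniso_star_chain (n : ℕ) (hn : 2 ≤ n) : ¬ Isom tildeOmegaStar (tildeChain n) := by
  intro h
  have := (isom_compSet_infinite h).1
    (by rw [compSet_tildeOmegaStar]; exact evens_infinite)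
  rw [compSet_tildeChain n hn] at this
  exact this (Set.finite_Iio n)

lemma noniso_chain_chain {n m : ℕ} (hn : 2 ≤ n) (hm : 2 ≤ m) (hnm : n ≠ m) :
    ¬ Isom (tildeChain n) (tildeChain m) := by
  intro h
  have := isom_compSet_ncard h
  rw [compSet_tildeChain n hn, compSet_tildeChain m hm, Iio_ncard, Iio_ncard] at this
  exact hnm this

lemma fstar_two_le (i : ℕ) (hi : 2 ≤ i) : Fstar i = tildeChain i := by
  match i with
  | (k+2) => rfl

lemma fstar_noniso {i j : ℕ} (hij : i ≠ j) : ¬ Isom (Fstar i) (Fstar j) := by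
  match i, j with
  | 0, 0 | 1, 1 => exact absurd rfl hij
  | 0, 1 => exact noniso_omega_star
  | 1, 0 => exact fun h => noniso_omega_star (isom_symm h)
  | 0, (k+2) => exact noniso_omega_chain (k+2) (by omega)
  | (k+2), 0 => exact fun h => noniso_omega_chain (k+2) (by omega) (isom_symm h)
  | 1, (k+2) => exact noniso_star_chain (k+2) (by omega)
  | (k+2), 1 => exact fun h => noniso_star_chain (k+2) (by omega) (isom_symm h)
  | (k+2), (l+2) =>
    exact noniso_chain_chain (by omega) (by omega) (by omega)

lemma not_isom_of_isom_ne {R : Struc} {i j : ℕ} (h : Isom R (Fstar i)) (hij : i ≠ j) :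
    ¬ Isom R (Fstar j) := fun h' => fstar_noniso hij (isom_trans (isom_symm h) h')

end Aux

/-! ### Part 1 : the learner -/

section Learner

open Classical in
/-- Elements of the window `{0,…,s}` comparable to another element of the window. -/
noncomputable def Cfin (R : Struc) (s : ℕ) : Finset ℕ :=
  (Finset.range (s+1)).filter fun x =>
    ∃ y ∈ Finset.range (s+1), y ≠ x ∧ (R x y = true ∨ R y x = true)

open Classical in
/-- Visible maxima. -/
noncomputable def mxF (R : Struc) (s : ℕ) : Finset ℕ :=
  (Cfin R s).filter fun x => ∀ y ∈ Cfin R s, R y x = true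

open Classical in
/-- Visible minima. -/
noncomputable def mnF (R : Struc) (s : ℕ) : Finset ℕ :=
  (Cfin R s).filter fun x => ∀ y ∈ Cfin R s, R x y = true

/-- The learner. -/
noncomputable def Mlearn : Struc → ℕ → Option ℕ
  | _, 0 => none
  | R, (s+1) =>
    if mxF R (s+1) ≠ mxF R s then some 0
    else if mnF R (s+1) ≠ mnF R s then some 1
    else some (Cfin R (s+1)).card

lemma Mlearn_succ (R : Struc) (s : ℕ) :
    Mlearn R (s+1) = if mxF R (s+1) ≠ mxF R s then some 0
      else if mnF R (s+1) ≠ mnF R s then some 1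
      else some (Cfin R (s+1)).card := rfl

lemma mem_Cfin {R : Struc} {s x : ℕ} :
    x ∈ Cfin R s ↔ x ≤ s ∧ ∃ y ≤ s, y ≠ x ∧ (R x y = true ∨ R y x = true) := by
  simp [Cfin, Nat.lt_succ_iff]

lemma mem_mxF {R : Struc} {s x : ℕ} :
    x ∈ mxF R s ↔ x ∈ Cfin R s ∧ ∀ y ∈ Cfin R s, R y x = true := by
  simp [mxF]

lemma mem_mnF {R : Struc} {s x : ℕ} :
    x ∈ mnF R s ↔ x ∈ Cfin R s ∧ ∀ y ∈ Cfin R s, R x y = true := by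
  simp [mnF]

lemma Cfin_congr {R R' : Struc} {s : ℕ} (h : restrEq R R' s) {k : ℕ} (hk : k ≤ s) :
    Cfin R k = Cfin R' k := by
  ext x
  simp only [mem_Cfin]
  constructor <;> rintro ⟨hx, y, hy, hxy, hor⟩ <;> refine ⟨hx, y, hy, hxy, ?_⟩
  · rw [← h x (hx.trans hk) y (hy.trans hk), ← h y (hy.trans hk) x (hx.trans hk)]; exact hor
  · rw [h x (hx.trans hk) y (hy.trans hk), h y (hy.trans hk) x (hx.trans hk)]; exact hor

lemma mxF_congr {R R' : Struc} {s : ℕ} (h : restrEq R R' s) {k : ℕ} (hk : k ≤ s) :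
    mxF R k = mxF R' k := by
  ext x
  simp only [mem_mxF, ← Cfin_congr h hk]
  have hb : ∀ z, z ∈ Cfin R k → z ≤ s := fun z hz => ((mem_Cfin.1 hz).1).trans hk
  constructor <;> rintro ⟨hx, hall⟩ <;> refine ⟨hx, fun y hy => ?_⟩
  · rw [← h y (hb y hy) x (hb x hx)]; exact hall y hy
  · rw [h y (hb y hy) x (hb x hx)]; exact hall y hy

lemma mnF_congr {R R' : Struc} {s : ℕ} (h : restrEq R R' s) {k : ℕ} (hk : k ≤ s) :
    mnF R k = mnF R' k := by
  ext x
  simp only [mem_mnF, ← Cfin_congr h hk]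
  have hb : ∀ z, z ∈ Cfin R k → z ≤ s := fun z hz => ((mem_Cfin.1 hz).1).trans hk
  constructor <;> rintro ⟨hx, hall⟩ <;> refine ⟨hx, fun y hy => ?_⟩
  · rw [← h x (hb x hx) y (hb y hy)]; exact hall y hy
  · rw [h x (hb x hx) y (hb y hy)]; exact hall y hy

lemma Mlearn_isLearner : IsLearner Mlearn := by
  intro R R' s h
  match s with
  | 0 => rfl
  | (s+1) =>
    show Mlearn R (s+1) = Mlearn R' (s+1)
    rw [Mlearn_succ, Mlearn_succ]
    rw [Cfin_congr h (le_refl (s+1)), mxF_congr h (le_refl (s+1)),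
      mxF_congr h (Nat.le_succ s), mnF_congr h (le_refl (s+1)), mnF_congr h (Nat.le_succ s)]

lemma Cfin_char {R : Struc} {K : ℕ → Prop}
    (hcmp : ∀ x y, x ≠ y → ((R x y = true ∨ R y x = true) ↔ (K x ∧ K y))) (s x : ℕ) :
    x ∈ Cfin R s ↔ (x ≤ s ∧ K x ∧ ∃ y, y ≤ s ∧ y ≠ x ∧ K y) := by
  rw [mem_Cfin]
  constructor
  · rintro ⟨hx, y, hy, hxy, hor⟩
    have h := (hcmp x y (Ne.symm hxy)).1 hor
    exact ⟨hx, h.1, y, hy, hxy, h.2⟩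
  · rintro ⟨hx, hKx, y, hy, hxy, hKy⟩
    exact ⟨hx, y, hy, hxy, (hcmp x y (Ne.symm hxy)).2 ⟨hKx, hKy⟩⟩

lemma pl_case_chain {R : Struc} {n : ℕ} (hn : 2 ≤ n) (e : ℕ ≃ ℕ)
    (he : ∀ x y, tildeChain n (e x) (e y) = R x y) :
    {s | Mlearn R s = some n}.Infinite ∧ ∀ i, i ≠ n → {s | Mlearn R s = some i}.Finite := by
  classical
  have hRiff : ∀ x y, R x y = true ↔ (x = y ∨ (e x < n ∧ e y < n ∧ e x ≤ e y)) := by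
    intro x y
    rw [← he, tildeChain_iff]
    constructor
    · rintro (h | h)
      · exact Or.inl (e.injective h)
      · exact Or.inr ⟨by omega, h.2, h.1⟩
    · rintro (rfl | h)
      · exact Or.inl rfl
      · exact Or.inr ⟨h.2.2, h.2.1⟩
  have hcmp : ∀ x y, x ≠ y → ((R x y = true ∨ R y x = true) ↔ ((e x < n) ∧ (e y < n))) := by
    intro x y hxy
    rw [hRiff, hRiff]
    constructor
    · rintro ((h | h) | (h | h))
      · exact absurd h hxy
      · exact ⟨h.1, h.2.1⟩
      · exact absurd h (Ne.symm hxy)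
      · exact ⟨h.2.1, h.1⟩
    · rintro ⟨hx, hy⟩
      rcases le_total (e x) (e y) with h | h
      · exact Or.inl (Or.inr ⟨hx, hy, h⟩)
      · exact Or.inr (Or.inr ⟨hy, hx, h⟩)
  set KS : Finset ℕ := (Finset.range n).image (fun v => e.symm v) with hKS
  have hKS_mem : ∀ x, x ∈ KS ↔ e x < n := by
    intro x
    simp only [hKS, Finset.mem_image, Finset.mem_range]
    constructor
    · rintro ⟨v, hv, rfl⟩; simpa using hv
    · intro h; exact ⟨e x, h, by simp⟩
  set S₀ := KS.sup id with hS₀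
  have hbound : ∀ x, x ∈ KS → x ≤ S₀ := fun x hx => Finset.le_sup (f := id) hx
  have hq₀ : e (e.symm 0) = 0 := by simp
  have hq₁ : e (e.symm 1) = 1 := by simp
  have hq₀K : e.symm 0 ∈ KS := (hKS_mem _).2 (by omega)
  have hq₁K : e.symm 1 ∈ KS := (hKS_mem _).2 (by omega)
  have hqne : e.symm 0 ≠ e.symm 1 := by
    intro h; rw [h, hq₁] at hq₀; omega
  have hCfin : ∀ s, S₀ ≤ s → Cfin R s = KS := by
    intro s hs
    ext x
    rw [Cfin_char hcmp, hKS_mem]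
    constructor
    · rintro ⟨_, hx, _⟩; exact hx
    · intro hx
      refine ⟨(hbound x ((hKS_mem x).2 hx)).trans hs, hx, ?_⟩
      rcases eq_or_ne x (e.symm 0) with rfl | hne
      · exact ⟨e.symm 1, (hbound _ hq₁K).trans hs, Ne.symm hqne, by omega⟩
      · exact ⟨e.symm 0, (hbound _ hq₀K).trans hs, fun h => hne h.symm, by omega⟩
  have hcard : KS.card = n := by
    rw [hKS, Finset.card_image_of_injective _ e.symm.injective, Finset.card_range]
  have hout : ∀ s, S₀ ≤ s → Mlearn R (s+1) = some n := by
    intro s hs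
    rw [Mlearn_succ]
    have h1 : Cfin R (s+1) = Cfin R s := by
      rw [hCfin _ (hs.trans (Nat.le_succ s)), hCfin _ hs]
    have hmx : mxF R (s+1) = mxF R s := by unfold mxF; rw [h1]
    have hmn : mnF R (s+1) = mnF R s := by unfold mnF; rw [h1]
    rw [if_neg (by simp [hmx]), if_neg (by simp [hmn]),
      hCfin _ (hs.trans (Nat.le_succ s)), hcard]
  constructor
  · apply Set.infinite_of_forall_exists_gt
    intro a
    exact ⟨max a S₀ + 1, hout _ (le_max_right _ _), by omega⟩
  · intro i hi
    apply Set.Finite.subset (Set.finite_Iic (S₀ + 1))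
    intro s hs
    simp only [Set.mem_setOf_eq] at hs
    simp only [Set.mem_Iic]
    by_contra h
    push_neg at h
    obtain ⟨t, rfl⟩ : ∃ t, s = t + 1 := ⟨s - 1, by omega⟩
    rw [hout t (by omega)] at hs
    exact hi (Option.some.inj hs).symm

lemma pl_case_omega {R : Struc} (e : ℕ ≃ ℕ)
    (he : ∀ x y, tildeOmega (e x) (e y) = R x y) :
    {s | Mlearn R s = some 0}.Infinite ∧ ∀ i, i ≠ 0 → {s | Mlearn R s = some i}.Finite := by
  classical
  have hRiff : ∀ x y, R x y = true ↔ (x = y ∨ (Even (e x) ∧ Even (e y) ∧ e x ≤ e y)) := by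
    intro x y
    rw [← he, tildeOmega_iff]
    constructor
    · rintro (h | h)
      · exact Or.inl (e.injective h)
      · exact Or.inr h
    · rintro (rfl | h)
      · exact Or.inl rfl
      · exact Or.inr h
  have hcmp : ∀ x y, x ≠ y → ((R x y = true ∨ R y x = true) ↔ (Even (e x) ∧ Even (e y))) := by
    intro x y hxy
    rw [hRiff, hRiff]
    constructor
    · rintro ((h | h) | (h | h))
      · exact absurd h hxy
      · exact ⟨h.1, h.2.1⟩
      · exact absurd h (Ne.symm hxy)
      · exact ⟨h.2.1, h.1⟩
    · rintro ⟨hx, hy⟩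
      rcases le_total (e x) (e y) with h | h
      · exact Or.inl (Or.inr ⟨hx, hy, h⟩)
      · exact Or.inr (Or.inr ⟨hy, hx, h⟩)
  have hmemC : ∀ s x, x ∈ Cfin R s ↔ (x ≤ s ∧ Even (e x) ∧ ∃ y, y ≤ s ∧ y ≠ x ∧ Even (e y)) :=
    fun s x => Cfin_char hcmp s x
  have hep₀ : e (e.symm 0) = 0 := by simp
  have hep₁ : e (e.symm 2) = 2 := by simp
  have hpne : e.symm 0 ≠ e.symm 2 := by
    intro h; rw [h, hep₁] at hep₀; omega
  set S₁ := max (e.symm 0) (e.symm 2) with hS₁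
  have hpart : ∀ s x, S₁ ≤ s → x ≤ s → Even (e x) → x ∈ Cfin R s := by
    intro s x hs hxs hex
    rw [hmemC]
    refine ⟨hxs, hex, ?_⟩
    rcases eq_or_ne x (e.symm 0) with rfl | hne
    · exact ⟨e.symm 2, le_trans (le_max_right _ _) hs, Ne.symm hpne,
        by rw [hep₁]; exact ⟨1, by omega⟩⟩
    · exact ⟨e.symm 0, le_trans (le_max_left _ _) hs, fun h => hne h.symm,
        by rw [hep₀]; exact Even.zero⟩
  have hmn_stable : ∀ s, S₁ ≤ s → mnF R s = {e.symm 0} := by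
    intro s hs
    ext x
    rw [mem_mnF, Finset.mem_singleton]
    constructor
    · rintro ⟨hxC, hall⟩
      have hp₀C : e.symm 0 ∈ Cfin R s :=
        hpart s _ hs (le_trans (le_max_left _ _) hs) (by rw [hep₀]; exact Even.zero)
      have hr := hall _ hp₀C
      rcases (hRiff x (e.symm 0)).1 hr with h | h
      · exact h
      · have hx0 : e x = 0 := by rw [hep₀] at h; omega
        apply e.injective
        rw [hx0, hep₀]
    · rintro rfl
      refine ⟨hpart s _ hs (le_trans (le_max_left _ _) hs)
        (by rw [hep₀]; exact Even.zero), fun y hyC => ?_⟩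
      rw [hRiff]
      rcases eq_or_ne (e.symm 0) y with h | h
      · exact Or.inl h
      · right
        have hy := (hmemC s y).1 hyC
        exact ⟨by rw [hep₀]; exact Even.zero, hy.2.1, by rw [hep₀]; omega⟩
  have hcard2 : ∀ s, S₁ ≤ s → 2 ≤ (Cfin R s).card := by
    intro s hs
    have h0 : e.symm 0 ∈ Cfin R s :=
      hpart s _ hs (le_trans (le_max_left _ _) hs) (by rw [hep₀]; exact Even.zero)
    have h1 : e.symm 2 ∈ Cfin R s :=
      hpart s _ hs (le_trans (le_max_right _ _) hs) (by rw [hep₁]; exact ⟨1, by omega⟩)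
    have hsub : ({e.symm 0, e.symm 2} : Finset ℕ) ⊆ Cfin R s := by
      intro z hz
      rcases Finset.mem_insert.1 hz with rfl | hz
      · exact h0
      · rw [Finset.mem_singleton.1 hz]; exact h1
    calc 2 = ({e.symm 0, e.symm 2} : Finset ℕ).card := (Finset.card_pair hpne).symm
    _ ≤ _ := Finset.card_le_card hsub
  have hgrow : ∀ c, ∃ Sc, ∀ s, Sc ≤ s → c < (Cfin R s).card := by
    intro c
    set T := (Finset.range (c+1)).image (fun v => e.symm (2*v)) with hT
    have hTcard : T.card = c+1 := by
      rw [hT, Finset.card_image_of_injective, Finset.card_range]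
      intro a b hab
      have := e.symm.injective hab
      omega
    refine ⟨max S₁ (T.sup id), fun s hs => ?_⟩
    have hsub : T ⊆ Cfin R s := by
      intro z hz
      rw [hT, Finset.mem_image] at hz
      obtain ⟨v, hv, rfl⟩ := hz
      apply hpart s _ (le_trans (le_max_left _ _) hs)
      · refine le_trans ?_ (le_trans (le_max_right S₁ _) hs)
        exact Finset.le_sup (f := id) (by rw [hT, Finset.mem_image]; exact ⟨v, hv, rfl⟩)
      · simp only [Equiv.apply_symm_apply]
        exact ⟨v, by omega⟩
    calc c < c + 1 := by omega
    _ = T.card := hTcard.symm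
    _ ≤ _ := Finset.card_le_card hsub
  have hrec : ∀ N, ∃ x, N < x ∧ Mlearn R x = some 0 := by
    intro N
    set N₁ := max N S₁ with hN₁
    have hS₁N : S₁ ≤ N₁ := le_max_right N S₁
    set B := (Finset.range (N₁+1)).sup (fun y => e y) with hB
    have hBle : ∀ y, y ≤ N₁ → e y ≤ B :=
      fun y hy => Finset.le_sup (f := fun y => e y) (Finset.mem_range.2 (by omega))
    have hex₁ : e (e.symm (2*B + 2)) = 2*B+2 := by simp
    have hx₁gt : N₁ < e.symm (2*B+2) := by
      by_contra h
      push_neg at h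
      have := hBle _ h
      omega
    obtain ⟨x, hxS, hxmax⟩ := Finset.exists_max_image
      ((Finset.range (e.symm (2*B+2) + 1)).filter (fun y => Even (e y))) (fun y => e y)
      ⟨e.symm (2*B+2), by
        simp only [Finset.mem_filter, Finset.mem_range]
        exact ⟨by omega, by rw [hex₁]; exact ⟨B+1, by omega⟩⟩⟩
    simp only [Finset.mem_filter, Finset.mem_range] at hxS
    have hex_max : ∀ y, y ≤ e.symm (2*B+2) → Even (e y) → e y ≤ e x := by
      intro y hy hey
      exact hxmax y (by
        simp only [Finset.mem_filter, Finset.mem_range]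
        exact ⟨by omega, hey⟩)
    have hxgtN : N₁ < x := by
      by_contra h
      push_neg at h
      have h1 : e x ≤ B := hBle x h
      have h2 : e (e.symm (2*B+2)) ≤ e x :=
        hex_max _ le_rfl (by rw [hex₁]; exact ⟨B+1, by omega⟩)
      omega
    obtain ⟨t, rfl⟩ : ∃ t, x = t + 1 := ⟨x - 1, by omega⟩
    refine ⟨t+1, by omega, ?_⟩
    rw [Mlearn_succ]
    have hxmx : (t+1) ∈ mxF R (t+1) := by
      rw [mem_mxF]
      refine ⟨hpart (t+1) (t+1) (by omega) le_rfl hxS.2, fun y hyC => ?_⟩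
      have hy := (hmemC (t+1) y).1 hyC
      rw [hRiff]
      rcases eq_or_ne y (t+1) with rfl | hne
      · exact Or.inl rfl
      · exact Or.inr ⟨hy.2.1, hxS.2, hex_max y (by omega) hy.2.1⟩
    have hnotmx : (t+1) ∉ mxF R t := by
      rw [mem_mxF]
      rintro ⟨hC, -⟩
      have := (hmemC t (t+1)).1 hC
      omega
    rw [if_pos (show mxF R (t+1) ≠ mxF R t from fun h => hnotmx (h ▸ hxmx))]
  refine ⟨?_, ?_⟩
  · apply Set.infinite_of_forall_exists_gt
    intro a
    obtain ⟨x, hx1, hx2⟩ := hrec a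
    exact ⟨x, hx2, hx1⟩
  · intro i hi
    match i, hi with
    | 1, _ =>
      apply Set.Finite.subset (Set.finite_Iic (S₁+1))
      intro s hs
      simp only [Set.mem_setOf_eq] at hs
      simp only [Set.mem_Iic]
      by_contra h
      push_neg at h
      obtain ⟨t, rfl⟩ : ∃ t, s = t + 1 := ⟨s-1, by omega⟩
      rw [Mlearn_succ] at hs
      by_cases hmx : mxF R (t+1) ≠ mxF R t
      · rw [if_pos hmx] at hs; simp at hs
      · rw [if_neg hmx] at hs
        have h1 : mnF R (t+1) = mnF R t := by
          rw [hmn_stable (t+1) (by omega), hmn_stable t (by omega)]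
        rw [if_neg (by simp [h1])] at hs
        have h2 := hcard2 (t+1) (by omega)
        have h3 := Option.some.inj hs
        omega
    | (c+2), _ =>
      obtain ⟨Sc, hSc⟩ := hgrow (c+2)
      apply Set.Finite.subset (Set.finite_Iic (max S₁ Sc + 1))
      intro s hs
      simp only [Set.mem_setOf_eq] at hs
      simp only [Set.mem_Iic]
      by_contra h
      push_neg at h
      obtain ⟨t, rfl⟩ : ∃ t, s = t+1 := ⟨s-1, by omega⟩
      rw [Mlearn_succ] at hs
      by_cases hmx : mxF R (t+1) ≠ mxF R t
      · rw [if_pos hmx] at hs; simp at hs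
      · rw [if_neg hmx] at hs
        have h1 : mnF R (t+1) = mnF R t := by
          rw [hmn_stable (t+1) (by omega), hmn_stable t (by omega)]
        rw [if_neg (by simp [h1])] at hs
        have h2 := hSc (t+1) (by omega)
        have h3 := Option.some.inj hs
        omega

lemma pl_case_star {R : Struc} (e : ℕ ≃ ℕ)
    (he : ∀ x y, tildeOmegaStar (e x) (e y) = R x y) :
    {s | Mlearn R s = some 1}.Infinite ∧ ∀ i, i ≠ 1 → {s | Mlearn R s = some i}.Finite := by
  classical
  have hRiff : ∀ x y, R x y = true ↔ (x = y ∨ (Even (e x) ∧ Even (e y) ∧ e y ≤ e x)) := by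
    intro x y
    rw [← he, tildeOmegaStar_iff]
    constructor
    · rintro (h | h)
      · exact Or.inl (e.injective h)
      · exact Or.inr h
    · rintro (rfl | h)
      · exact Or.inl rfl
      · exact Or.inr h
  have hcmp : ∀ x y, x ≠ y → ((R x y = true ∨ R y x = true) ↔ (Even (e x) ∧ Even (e y))) := by
    intro x y hxy
    rw [hRiff, hRiff]
    constructor
    · rintro ((h | h) | (h | h))
      · exact absurd h hxy
      · exact ⟨h.1, h.2.1⟩
      · exact absurd h (Ne.symm hxy)
      · exact ⟨h.2.1, h.1⟩
    · rintro ⟨hx, hy⟩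
      rcases le_total (e x) (e y) with h | h
      · exact Or.inr (Or.inr ⟨hy, hx, h⟩)
      · exact Or.inl (Or.inr ⟨hx, hy, h⟩)
  have hmemC : ∀ s x, x ∈ Cfin R s ↔ (x ≤ s ∧ Even (e x) ∧ ∃ y, y ≤ s ∧ y ≠ x ∧ Even (e y)) :=
    fun s x => Cfin_char hcmp s x
  have hep₀ : e (e.symm 0) = 0 := by simp
  have hep₁ : e (e.symm 2) = 2 := by simp
  have hpne : e.symm 0 ≠ e.symm 2 := by
    intro h; rw [h, hep₁] at hep₀; omega
  set S₁ := max (e.symm 0) (e.symm 2) with hS₁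
  have hpart : ∀ s x, S₁ ≤ s → x ≤ s → Even (e x) → x ∈ Cfin R s := by
    intro s x hs hxs hex
    rw [hmemC]
    refine ⟨hxs, hex, ?_⟩
    rcases eq_or_ne x (e.symm 0) with rfl | hne
    · exact ⟨e.symm 2, le_trans (le_max_right _ _) hs, Ne.symm hpne,
        by rw [hep₁]; exact ⟨1, by omega⟩⟩
    · exact ⟨e.symm 0, le_trans (le_max_left _ _) hs, fun h => hne h.symm,
        by rw [hep₀]; exact Even.zero⟩
  have hmx_stable : ∀ s, S₁ ≤ s → mxF R s = {e.symm 0} := by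
    intro s hs
    ext x
    rw [mem_mxF, Finset.mem_singleton]
    constructor
    · rintro ⟨hxC, hall⟩
      have hp₀C : e.symm 0 ∈ Cfin R s :=
        hpart s _ hs (le_trans (le_max_left _ _) hs) (by rw [hep₀]; exact Even.zero)
      have hr := hall _ hp₀C
      rcases (hRiff (e.symm 0) x).1 hr with h | h
      · exact h.symm
      · have hx0 : e x = 0 := by rw [hep₀] at h; omega
        apply e.injective
        rw [hx0, hep₀]
    · rintro rfl
      refine ⟨hpart s _ hs (le_trans (le_max_left _ _) hs)
        (by rw [hep₀]; exact Even.zero), fun y hyC => ?_⟩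
      rw [hRiff]
      rcases eq_or_ne y (e.symm 0) with h | h
      · exact Or.inl h
      · right
        have hy := (hmemC s y).1 hyC
        exact ⟨hy.2.1, by rw [hep₀]; exact Even.zero, by rw [hep₀]; omega⟩
  have hcard2 : ∀ s, S₁ ≤ s → 2 ≤ (Cfin R s).card := by
    intro s hs
    have h0 : e.symm 0 ∈ Cfin R s :=
      hpart s _ hs (le_trans (le_max_left _ _) hs) (by rw [hep₀]; exact Even.zero)
    have h1 : e.symm 2 ∈ Cfin R s :=
      hpart s _ hs (le_trans (le_max_right _ _) hs) (by rw [hep₁]; exact ⟨1, by omega⟩)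
    have hsub : ({e.symm 0, e.symm 2} : Finset ℕ) ⊆ Cfin R s := by
      intro z hz
      rcases Finset.mem_insert.1 hz with rfl | hz
      · exact h0
      · rw [Finset.mem_singleton.1 hz]; exact h1
    calc 2 = ({e.symm 0, e.symm 2} : Finset ℕ).card := (Finset.card_pair hpne).symm
    _ ≤ _ := Finset.card_le_card hsub
  have hgrow : ∀ c, ∃ Sc, ∀ s, Sc ≤ s → c < (Cfin R s).card := by
    intro c
    set T := (Finset.range (c+1)).image (fun v => e.symm (2*v)) with hT
    have hTcard : T.card = c+1 := by
      rw [hT, Finset.card_image_of_injective, Finset.card_range]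
      intro a b hab
      have := e.symm.injective hab
      omega
    refine ⟨max S₁ (T.sup id), fun s hs => ?_⟩
    have hsub : T ⊆ Cfin R s := by
      intro z hz
      rw [hT, Finset.mem_image] at hz
      obtain ⟨v, hv, rfl⟩ := hz
      apply hpart s _ (le_trans (le_max_left _ _) hs)
      · refine le_trans ?_ (le_trans (le_max_right S₁ _) hs)
        exact Finset.le_sup (f := id) (by rw [hT, Finset.mem_image]; exact ⟨v, hv, rfl⟩)
      · simp only [Equiv.apply_symm_apply]
        exact ⟨v, by omega⟩
    calc c < c + 1 := by omega
    _ = T.card := hTcard.symm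
    _ ≤ _ := Finset.card_le_card hsub
  have hrec : ∀ N, ∃ x, N < x ∧ Mlearn R x = some 1 := by
    intro N
    set N₁ := max N S₁ with hN₁
    have hS₁N : S₁ ≤ N₁ := le_max_right N S₁
    set B := (Finset.range (N₁+1)).sup (fun y => e y) with hB
    have hBle : ∀ y, y ≤ N₁ → e y ≤ B :=
      fun y hy => Finset.le_sup (f := fun y => e y) (Finset.mem_range.2 (by omega))
    have hex₁ : e (e.symm (2*B + 2)) = 2*B+2 := by simp
    have hx₁gt : N₁ < e.symm (2*B+2) := by
      by_contra h
      push_neg at h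
      have := hBle _ h
      omega
    obtain ⟨x, hxS, hxmax⟩ := Finset.exists_max_image
      ((Finset.range (e.symm (2*B+2) + 1)).filter (fun y => Even (e y))) (fun y => e y)
      ⟨e.symm (2*B+2), by
        simp only [Finset.mem_filter, Finset.mem_range]
        exact ⟨by omega, by rw [hex₁]; exact ⟨B+1, by omega⟩⟩⟩
    simp only [Finset.mem_filter, Finset.mem_range] at hxS
    have hex_max : ∀ y, y ≤ e.symm (2*B+2) → Even (e y) → e y ≤ e x := by
      intro y hy hey
      exact hxmax y (by
        simp only [Finset.mem_filter, Finset.mem_range]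
        exact ⟨by omega, hey⟩)
    have hxgtN : N₁ < x := by
      by_contra h
      push_neg at h
      have h1 : e x ≤ B := hBle x h
      have h2 : e (e.symm (2*B+2)) ≤ e x :=
        hex_max _ le_rfl (by rw [hex₁]; exact ⟨B+1, by omega⟩)
      omega
    obtain ⟨t, rfl⟩ : ∃ t, x = t + 1 := ⟨x - 1, by omega⟩
    refine ⟨t+1, by omega, ?_⟩
    rw [Mlearn_succ]
    have hmxeq : mxF R (t+1) = mxF R t := by
      rw [hmx_stable (t+1) (by omega), hmx_stable t (by omega)]
    rw [if_neg (by simp [hmxeq])]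
    have hxmn : (t+1) ∈ mnF R (t+1) := by
      rw [mem_mnF]
      refine ⟨hpart (t+1) (t+1) (by omega) le_rfl hxS.2, fun y hyC => ?_⟩
      have hy := (hmemC (t+1) y).1 hyC
      rw [hRiff]
      rcases eq_or_ne (t+1) y with h | hne
      · exact Or.inl h
      · exact Or.inr ⟨hxS.2, hy.2.1, hex_max y (by omega) hy.2.1⟩
    have hnotmn : (t+1) ∉ mnF R t := by
      rw [mem_mnF]
      rintro ⟨hC, -⟩
      have := (hmemC t (t+1)).1 hC
      omega
    rw [if_pos (show mnF R (t+1) ≠ mnF R t from fun h => hnotmn (h ▸ hxmn))]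
  refine ⟨?_, ?_⟩
  · apply Set.infinite_of_forall_exists_gt
    intro a
    obtain ⟨x, hx1, hx2⟩ := hrec a
    exact ⟨x, hx2, hx1⟩
  · intro i hi
    have key : ∀ t, S₁ ≤ t → ∀ j, Mlearn R (t+1) = some j → j = 1 ∨ 2 ≤ j := by
      intro t ht j hj
      rw [Mlearn_succ] at hj
      have hmxeq : mxF R (t+1) = mxF R t := by
        rw [hmx_stable (t+1) (by omega), hmx_stable t (by omega)]
      rw [if_neg (by simp [hmxeq])] at hj
      by_cases hmn : mnF R (t+1) ≠ mnF R t
      · rw [if_pos hmn] at hj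
        exact Or.inl (Option.some.inj hj).symm
      · rw [if_neg hmn] at hj
        have h2 := hcard2 (t+1) (by omega)
        have h3 := Option.some.inj hj
        omega
    match i, hi with
    | 0, _ =>
      apply Set.Finite.subset (Set.finite_Iic (S₁+1))
      intro s hs
      simp only [Set.mem_setOf_eq] at hs
      simp only [Set.mem_Iic]
      by_contra h
      push_neg at h
      obtain ⟨t, rfl⟩ : ∃ t, s = t + 1 := ⟨s-1, by omega⟩
      rcases key t (by omega) 0 hs with h' | h' <;> omega
    | (c+2), _ =>
      obtain ⟨Sc, hSc⟩ := hgrow (c+2)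
      apply Set.Finite.subset (Set.finite_Iic (max S₁ Sc + 1))
      intro s hs
      simp only [Set.mem_setOf_eq] at hs
      simp only [Set.mem_Iic]
      by_contra h
      push_neg at h
      obtain ⟨t, rfl⟩ : ∃ t, s = t+1 := ⟨s-1, by omega⟩
      rw [Mlearn_succ] at hs
      have hmxeq : mxF R (t+1) = mxF R t := by
        rw [hmx_stable (t+1) (by omega), hmx_stable t (by omega)]
      rw [if_neg (by simp [hmxeq])] at hs
      by_cases hmn : mnF R (t+1) ≠ mnF R t
      · rw [if_pos hmn] at hs; simp at hs
      · rw [if_neg hmn] at hs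
        have h2 := hSc (t+1) (by omega)
        have h3 := Option.some.inj hs
        omega

lemma Mlearn_pl : PLLearns Fstar Mlearn := by
  rintro R ⟨i₀, hIso⟩ i
  match i₀, hIso with
  | 0, hIso =>
    obtain ⟨e, he⟩ := hIso
    obtain ⟨hinf, hfin⟩ := pl_case_omega e he
    rcases eq_or_ne i 0 with rfl | hne
    · exact iff_of_true hinf ⟨e, he⟩
    · exact iff_of_false ((hfin i hne).not_infinite)
        (not_isom_of_isom_ne ⟨e, he⟩ (Ne.symm hne))
  | 1, hIso =>
    obtain ⟨e, he⟩ := hIso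
    obtain ⟨hinf, hfin⟩ := pl_case_star e he
    rcases eq_or_ne i 1 with rfl | hne
    · exact iff_of_true hinf ⟨e, he⟩
    · exact iff_of_false ((hfin i hne).not_infinite)
        (not_isom_of_isom_ne ⟨e, he⟩ (Ne.symm hne))
  | (k+2), hIso =>
    obtain ⟨e, he⟩ := hIso
    obtain ⟨hinf, hfin⟩ := pl_case_chain (n := k+2) (by omega) e he
    rcases eq_or_ne i (k+2) with rfl | hne
    · exact iff_of_true hinf ⟨e, he⟩
    · exact iff_of_false ((hfin i hne).not_infinite)
        (not_isom_of_isom_ne ⟨e, he⟩ (Ne.symm hne))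

end Learner

/-! ### Part 2 : non-E3-learnability -/

section Part2

/-- Transpose of a structure. -/
def transp (R : Struc) : Struc := fun x y => R y x

lemma transp_tildeOmega : transp tildeOmega = tildeOmegaStar := by
  funext x y
  exact decide_eq_decide.mpr (by omega)

lemma transp_tildeOmegaStar : transp tildeOmegaStar = tildeOmega := by
  funext x y
  exact decide_eq_decide.mpr (by omega)

lemma isom_transp {R R' : Struc} (h : Isom R R') : Isom (transp R) (transp R') := by
  obtain ⟨e, he⟩ := h
  exact ⟨e, fun x y => he y x⟩

lemma compl_lt_infinite (n : ℕ) : {x : ℕ | ¬ x < n}.Infinite := by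
  refine Set.infinite_of_injective_forall_mem (f := fun k : ℕ => n + k) ?_ ?_
  · intro a b hab; simp only [] at hab; omega
  · intro k; simp only [Set.mem_setOf_eq]; omega

lemma isom_transp_chain (n : ℕ) : Isom (transp (tildeChain n)) (tildeChain n) := by
  apply master_iso (K := {x | x < n}) (K' := {x | x < n})
    (p := fun x => n - 1 - x) (p' := fun x => x) (φ := fun x => n - 1 - x)
  · intro x y
    show tildeChain n y x = true ↔ _
    rw [tildeChain_iff]
    simp only [Set.mem_setOf_eq]
    omega
  · intro x y
    rw [tildeChain_iff]
    simp only [Set.mem_setOf_eq]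
    omega
  · intro x hx; simp only [Set.mem_setOf_eq] at *; omega
  · intro x hx y hy hxy; simp only [Set.mem_setOf_eq] at *; omega
  · intro y hy
    simp only [Set.mem_setOf_eq] at *
    refine ⟨n - 1 - y, ?_, ?_⟩ <;> omega
  · intro x hx y hy
    simp only [Set.mem_setOf_eq] at hx hy
    constructor <;> intro h <;> omega
  · exact compl_lt_infinite n
  · exact compl_lt_infinite n

lemma LD_transp {R : Struc} (hR : R ∈ LD Fstar) : transp R ∈ LD Fstar := by
  obtain ⟨i, hi⟩ := hR
  match i, hi with
  | 0, hi =>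
    refine ⟨1, ?_⟩
    have := isom_transp hi
    rwa [show transp (Fstar 0) = Fstar 1 from transp_tildeOmega] at this
  | 1, hi =>
    refine ⟨0, ?_⟩
    have := isom_transp hi
    rwa [show transp (Fstar 1) = Fstar 0 from transp_tildeOmegaStar] at this
  | (k+2), hi =>
    exact ⟨k+2, isom_trans (isom_transp hi) (isom_transp_chain (k+2))⟩

/-- Basic neighborhoods in the product space. -/
lemma nbhd_basis {U : Set Struc} (hU : IsOpen U) {X : Struc} (hX : X ∈ U) :
    ∃ t, ∀ W : Struc, restrEq W X t → W ∈ U := by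
  classical
  obtain ⟨I, u, hu, hsub⟩ := isOpen_pi_iff.1 hU X hX
  have H : ∀ a ∈ I, ∃ t, ∀ g : ℕ → Bool, (∀ b ≤ t, g b = X a b) → g ∈ u a := by
    intro a ha
    obtain ⟨J, v, hv, hsub2⟩ := isOpen_pi_iff.1 (hu a ha).1 (X a) (hu a ha).2
    refine ⟨J.sup id, fun g hg => hsub2 ?_⟩
    rw [Set.mem_pi]
    intro b hb
    rw [hg b (Finset.le_sup (f := id) hb)]
    exact (hv b hb).2
  have H' : ∀ a : ℕ, ∃ t, a ∈ I → ∀ g : ℕ → Bool, (∀ b ≤ t, g b = X a b) → g ∈ u a := by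
    intro a
    by_cases ha : a ∈ I
    · obtain ⟨t, ht⟩ := H a ha
      exact ⟨t, fun _ => ht⟩
    · exact ⟨0, fun h => absurd h ha⟩
  choose t ht using H'
  refine ⟨max (I.sup id) (I.sup t), fun W hW => hsub ?_⟩
  rw [Set.mem_pi]
  intro a ha
  rw [Finset.mem_coe] at ha
  apply ht a ha
  intro b hb
  exact hW a (le_trans (Finset.le_sup (f := id) ha) (le_max_left _ _)) b
    (le_trans (hb.trans (Finset.le_sup (f := t) ha)) (le_max_right _ _))

lemma cont_loc (Γ : Struc → ℕ → ℕ → ℕ) (hc : ContinuousOn Γ (LD Fstar))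
    {X : Struc} (hX : X ∈ LD Fstar) (m j : ℕ) :
    ∃ t, ∀ W ∈ LD Fstar, restrEq W X t → Γ W m j = Γ X m j := by
  have hcont : ContinuousWithinAt (fun W => Γ W m j) (LD Fstar) X := by
    have hev : Continuous (fun p : ℕ → ℕ → ℕ => p m j) :=
      (continuous_apply j).comp (continuous_apply m)
    exact hev.continuousAt.comp_continuousWithinAt (hc X hX)
  have hmem : (fun W => Γ W m j) ⁻¹' {Γ X m j} ∈ nhdsWithin X (LD Fstar) :=
    hcont ((isOpen_discrete {Γ X m j}).mem_nhds rfl)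
  rw [mem_nhdsWithin] at hmem
  obtain ⟨U, hUo, hXU, hsub⟩ := hmem
  obtain ⟨t, ht⟩ := nbhd_basis hUo hXU
  exact ⟨t, fun W hW hre => hsub ⟨ht W hre, hW⟩⟩

/-- Canonical finite-chain structures given by a list. -/
def cstruc (l : List ℕ) : Struc := fun x y =>
  decide (x = y ∨ (x ∈ l ∧ y ∈ l ∧ l.idxOf x ≤ l.idxOf y))

lemma cstruc_iff (l : List ℕ) (x y : ℕ) :
    cstruc l x y = true ↔ (x = y ∨ (x ∈ l ∧ y ∈ l ∧ l.idxOf x ≤ l.idxOf y)) := by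
  simp [cstruc]

/-- Conditions. -/
def Cond (l : List ℕ) (s : ℕ) : Prop := l.Nodup ∧ 2 ≤ l.length ∧ ∀ x ∈ l, x < s

/-- Conservative (upward) completions of a condition. -/
def ConsUp (l : List ℕ) (s : ℕ) : Set Struc :=
  {X | X ∈ LD Fstar ∧ restrEq X (cstruc l) s ∧
    ∀ x, x ∈ compSet X → (x ∈ l ∨ (s < x ∧ ∀ z ∈ l, X z x = true))}

/-- Order-theoretic properties of members of `LD Fstar`. -/
lemma LD_props {X : Struc} (hX : X ∈ LD Fstar) :
    (∀ x, X x x = true) ∧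
    (∀ x y, X x y = true → X y x = true → x = y) ∧
    (∀ x y z, X x y = true → X y z = true → X x z = true) ∧
    (∀ x y, x ∈ compSet X → y ∈ compSet X → (X x y = true ∨ X y x = true)) := by
  obtain ⟨i, e, he⟩ := hX
  have key : (∀ a, Fstar i a a = true) ∧
      (∀ a b, Fstar i a b = true → Fstar i b a = true → a = b) ∧
      (∀ a b c, Fstar i a b = true → Fstar i b c = true → Fstar i a c = true) ∧
      (∀ a b, a ∈ compSet (Fstar i) → b ∈ compSet (Fstar i) →
        (Fstar i a b = true ∨ Fstar i b a = true)) := by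
    match i with
    | 0 =>
      refine ⟨?_, ?_, ?_, ?_⟩
      · intro a; simp [Fstar, tildeOmega]
      · intro a b h1 h2
        simp only [Fstar, tildeOmega, decide_eq_true_eq] at h1 h2; omega
      · intro a b c h1 h2
        simp only [Fstar, tildeOmega, decide_eq_true_eq] at h1 h2 ⊢; omega
      · intro a b ha hb
        rw [show Fstar 0 = tildeOmega from rfl, compSet_tildeOmega] at ha hb
        simp only [Set.mem_setOf_eq, Nat.even_iff] at ha hb
        simp only [Fstar, tildeOmega, decide_eq_true_eq]
        omega
    | 1 =>
      refine ⟨?_, ?_, ?_, ?_⟩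
      · intro a; simp [Fstar, tildeOmegaStar]
      · intro a b h1 h2
        simp only [Fstar, tildeOmegaStar, decide_eq_true_eq] at h1 h2; omega
      · intro a b c h1 h2
        simp only [Fstar, tildeOmegaStar, decide_eq_true_eq] at h1 h2 ⊢; omega
      · intro a b ha hb
        rw [show Fstar 1 = tildeOmegaStar from rfl, compSet_tildeOmegaStar] at ha hb
        simp only [Set.mem_setOf_eq, Nat.even_iff] at ha hb
        simp only [Fstar, tildeOmegaStar, decide_eq_true_eq]
        omega
    | (k+2) =>
      refine ⟨?_, ?_, ?_, ?_⟩
      · intro a; simp [Fstar, tildeChain]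
      · intro a b h1 h2
        simp only [Fstar, tildeChain, decide_eq_true_eq] at h1 h2; omega
      · intro a b c h1 h2
        simp only [Fstar, tildeChain, decide_eq_true_eq] at h1 h2 ⊢; omega
      · intro a b ha hb
        rw [show Fstar (k+2) = tildeChain (k+2) from rfl,
          compSet_tildeChain (k+2) (by omega)] at ha hb
        simp only [Set.mem_setOf_eq] at ha hb
        simp only [Fstar, tildeChain, decide_eq_true_eq]
        omega
  obtain ⟨hrefl, hanti, htrans, htot⟩ := key
  have hcomp : compSet X = e ⁻¹' compSet (Fstar i) := compSet_eq e he
  refine ⟨?_, ?_, ?_, ?_⟩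
  · intro x; rw [← he]; exact hrefl (e x)
  · intro x y h1 h2
    rw [← he] at h1 h2
    exact e.injective (hanti _ _ h1 h2)
  · intro x y z h1 h2
    rw [← he] at h1 h2 ⊢
    exact htrans _ _ _ h1 h2
  · intro x y hx hy
    rw [hcomp, Set.mem_preimage] at hx hy
    rw [← he, ← he]
    exact htot _ _ hx hy

/-- Existence of a minimum for a total transitive relation on a finite set. -/
lemma exists_rel_min_aux (rel : ℕ → ℕ → Prop) (n : ℕ) :
    ∀ S : Finset ℕ, S.card = n → S.Nonempty →
    (∀ x ∈ S, ∀ y ∈ S, rel x y ∨ rel y x) →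
    (∀ x ∈ S, ∀ y ∈ S, ∀ z ∈ S, rel x y → rel y z → rel x z) →
    ∃ m ∈ S, ∀ b ∈ S, rel m b := by
  classical
  induction n with
  | zero =>
    intro S hcard hS _ _
    rw [Finset.card_eq_zero] at hcard
    subst hcard
    exact absurd hS (by simp)
  | succ n ih =>
    intro S hcard hS htot htrans
    have hrefl : ∀ x ∈ S, rel x x := fun x hx => by
      rcases htot x hx x hx with h | h <;> exact h
    obtain ⟨a, ha⟩ := hS
    by_cases hS' : (S.erase a).Nonempty
    · have hcard' : (S.erase a).card = n := by
        rw [Finset.card_erase_of_mem ha, hcard]; omega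
      have hsub : ∀ x ∈ S.erase a, x ∈ S := fun x hx => Finset.mem_of_mem_erase hx
      obtain ⟨m', hm', hmin'⟩ := ih (S.erase a) hcard' hS'
        (fun x hx y hy => htot x (hsub x hx) y (hsub y hy))
        (fun x hx y hy z hz => htrans x (hsub x hx) y (hsub y hy) z (hsub z hz))
      have hm'S : m' ∈ S := hsub m' hm'
      rcases htot a ha m' hm'S with h | h
      · refine ⟨a, ha, fun b hb => ?_⟩
        rcases eq_or_ne b a with heq | hne
        · rw [heq]; exact hrefl a ha
        · exact htrans a ha m' hm'S b hb h (hmin' b (Finset.mem_erase.2 ⟨hne, hb⟩))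
      · refine ⟨m', hm'S, fun b hb => ?_⟩
        rcases eq_or_ne b a with heq | hne
        · rw [heq]; exact h
        · exact hmin' b (Finset.mem_erase.2 ⟨hne, hb⟩)
    · refine ⟨a, ha, fun b hb => ?_⟩
      rcases eq_or_ne b a with heq | hne
      · rw [heq]; exact hrefl a ha
      · exact absurd ⟨b, Finset.mem_erase.2 ⟨hne, hb⟩⟩ hS' 

lemma exists_rel_min (rel : ℕ → ℕ → Prop) (S : Finset ℕ) (hS : S.Nonempty)
    (htot : ∀ x ∈ S, ∀ y ∈ S, rel x y ∨ rel y x)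
    (htrans : ∀ x ∈ S, ∀ y ∈ S, ∀ z ∈ S, rel x y → rel y z → rel x z) :
    ∃ m ∈ S, ∀ b ∈ S, rel m b :=
  exists_rel_min_aux rel S.card S rfl hS htot htrans

/-- A finite set with a total transitive relation can be sorted into a list. -/
lemma exists_sorted_list_aux (rel : ℕ → ℕ → Prop) (n : ℕ) :
    ∀ S : Finset ℕ, S.card = n →
    (∀ x ∈ S, ∀ y ∈ S, rel x y ∨ rel y x) →
    (∀ x ∈ S, ∀ y ∈ S, ∀ z ∈ S, rel x y → rel y z → rel x z) →
    ∃ w : List ℕ, w.Nodup ∧ (∀ x, x ∈ w ↔ x ∈ S) ∧ w.Pairwise rel := by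
  classical
  induction n with
  | zero =>
    intro S hcard _ _
    rw [Finset.card_eq_zero] at hcard
    subst hcard
    exact ⟨[], by simp, by simp, List.Pairwise.nil⟩
  | succ n ih =>
    intro S hcard htot htrans
    have hS : S.Nonempty := by rw [← Finset.card_pos, hcard]; omega
    obtain ⟨m, hm, hmin⟩ := exists_rel_min rel S hS htot htrans
    have hcard' : (S.erase m).card = n := by rw [Finset.card_erase_of_mem hm, hcard]; omega
    have hsub : ∀ x ∈ S.erase m, x ∈ S := fun x hx => Finset.mem_of_mem_erase hx
    obtain ⟨w', hnd', hmem', hpw'⟩ := ih (S.erase m) hcard'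
      (fun x hx y hy => htot x (hsub x hx) y (hsub y hy))
      (fun x hx y hy z hz => htrans x (hsub x hx) y (hsub y hy) z (hsub z hz))
    refine ⟨m :: w', ?_, ?_, ?_⟩
    · rw [List.nodup_cons]
      refine ⟨fun hc => ?_, hnd'⟩
      have := (hmem' m).1 hc
      exact absurd this (Finset.notMem_erase m S)
    · intro x
      rw [List.mem_cons, hmem']
      constructor
      · rintro (rfl | hx)
        · exact hm
        · exact hsub x hx
      · intro hx
        rcases eq_or_ne x m with rfl | hne
        · exact Or.inl rfl
        · exact Or.inr (Finset.mem_erase.2 ⟨hne, hx⟩)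
    · rw [List.pairwise_cons]
      exact ⟨fun b hb => hmin b (hsub b ((hmem' b).1 hb)), hpw'⟩

lemma exists_sorted_list (rel : ℕ → ℕ → Prop) (S : Finset ℕ)
    (htot : ∀ x ∈ S, ∀ y ∈ S, rel x y ∨ rel y x)
    (htrans : ∀ x ∈ S, ∀ y ∈ S, ∀ z ∈ S, rel x y → rel y z → rel x z) :
    ∃ w : List ℕ, w.Nodup ∧ (∀ x, x ∈ w ↔ x ∈ S) ∧ w.Pairwise rel :=
  exists_sorted_list_aux rel S.card S rfl htot htrans

lemma beq {b c : Bool} (h : (b = true ↔ c = true)) : b = c := by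
  cases b <;> cases c <;> simp_all

lemma indexOf_prefix {l w : List ℕ} (h : l <+: w) {x : ℕ} (hx : x ∈ l) :
    w.idxOf x = l.idxOf x := by
  obtain ⟨t, rfl⟩ := h
  exact List.idxOf_append_of_mem hx

lemma length_le_indexOf {l : List ℕ} {x : ℕ} (hx : x ∉ l) (ext : List ℕ) :
    l.length ≤ (l ++ ext).idxOf x := by
  induction l with
  | nil => exact Nat.zero_le _
  | cons a l ih =>
    have hxa : x ≠ a := fun h => hx (h ▸ List.mem_cons_self)
    have hxl : x ∉ l := fun h => hx (List.mem_cons_of_mem a h)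
    show (a :: l).length ≤ ((a :: l) ++ ext).idxOf x
    rw [List.cons_append, List.idxOf_cons_ne _ (fun h => hxa h.symm)]
    simpa using ih hxl

lemma cstruc_refl (l : List ℕ) (x : ℕ) : cstruc l x x = true := by
  rw [cstruc_iff]; exact Or.inl rfl

lemma cstruc_restrEq {l ext : List ℕ} {s : ℕ} (hl : ∀ x ∈ l, x ≤ s)
    (hext : ∀ x ∈ ext, s < x) : restrEq (cstruc (l ++ ext)) (cstruc l) s := by
  intro x hx y hy
  apply beq
  rw [cstruc_iff, cstruc_iff]
  have hmx : x ∈ l ++ ext ↔ x ∈ l := by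
    rw [List.mem_append]
    exact ⟨fun h => h.resolve_right (fun h' => by have := hext x h'; omega), Or.inl⟩
  have hmy : y ∈ l ++ ext ↔ y ∈ l := by
    rw [List.mem_append]
    exact ⟨fun h => h.resolve_right (fun h' => by have := hext y h'; omega), Or.inl⟩
  constructor
  · rintro (rfl | ⟨h1, h2, h3⟩)
    · exact Or.inl rfl
    · refine Or.inr ⟨hmx.1 h1, hmy.1 h2, ?_⟩
      rwa [indexOf_prefix ⟨ext, rfl⟩ (hmx.1 h1), indexOf_prefix ⟨ext, rfl⟩ (hmy.1 h2)] at h3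
  · rintro (rfl | ⟨h1, h2, h3⟩)
    · exact Or.inl rfl
    · refine Or.inr ⟨hmx.2 h1, hmy.2 h2, ?_⟩
      rwa [indexOf_prefix ⟨ext, rfl⟩ h1, indexOf_prefix ⟨ext, rfl⟩ h2]

lemma compSet_cstruc {w : List ℕ} (hnd : w.Nodup) (hlen : 2 ≤ w.length) :
    compSet (cstruc w) = {x | x ∈ w} := by
  ext x
  simp only [compSet, Set.mem_setOf_eq]
  constructor
  · rintro ⟨y, hy, h | h⟩
    · rcases (cstruc_iff w x y).1 h with h' | h'
      · exact absurd h'.symm hy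
      · exact h'.1
    · rcases (cstruc_iff w y x).1 h with h' | h'
      · exact absurd h' hy
      · exact h'.2.1
  · intro hx
    have h0 : w.get ⟨0, by omega⟩ ∈ w := List.get_mem _ _
    have h1 : w.get ⟨1, by omega⟩ ∈ w := List.get_mem _ _
    have hne01 : w.get ⟨0, by omega⟩ ≠ w.get ⟨1, by omega⟩ := by
      intro h
      have := (List.Nodup.get_inj_iff hnd).1 h
      simp at this
    have pick : ∃ z, z ∈ w ∧ z ≠ x := by
      rcases eq_or_ne (w.get ⟨0, by omega⟩) x with rfl | hne
      · exact ⟨w.get ⟨1, by omega⟩, h1, fun h => hne01 h.symm⟩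
      · exact ⟨w.get ⟨0, by omega⟩, h0, hne⟩
    obtain ⟨z, hzw, hzx⟩ := pick
    rcases le_total (w.idxOf x) (w.idxOf z) with h | h
    · exact ⟨z, hzx, Or.inl ((cstruc_iff w x z).2 (Or.inr ⟨hx, hzw, h⟩))⟩
    · exact ⟨z, hzx, Or.inr ((cstruc_iff w z x).2 (Or.inr ⟨hzw, hx, h⟩))⟩

/-- The key normal-form lemma: a conservative completion of a condition agrees on a
window `{0,…,u}` with a canonical finite-chain structure extending the condition. -/
lemma window_lemma {X : Struc} {l : List ℕ} {s u : ℕ}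
    (hcond : Cond l s) (hXc : X ∈ ConsUp l s) (hsu : s ≤ u) :
    ∃ w : List ℕ, l <+: w ∧ w.Nodup ∧ 2 ≤ w.length ∧ (∀ x ∈ w, x ≤ u) ∧
      (∀ x, x ∈ w ↔ (x ∈ compSet X ∧ x ≤ u)) ∧
      (∀ x, x ≤ u → ∀ y, y ≤ u → X x y = cstruc w x y) := by
  classical
  obtain ⟨hXLD, hres, hcons⟩ := hXc
  obtain ⟨hrefl, hanti, htrans, htot⟩ := LD_props hXLD
  obtain ⟨hnd, hlen, hbd⟩ := hcond
  -- members of l are in the comparability set of X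
  have hl_mem_cs : ∀ x ∈ l, x ∈ compSet X := by
    intro x hx
    have h0 : l.get ⟨0, by omega⟩ ∈ l := List.get_mem _ _
    have h1 : l.get ⟨1, by omega⟩ ∈ l := List.get_mem _ _
    have hne01 : l.get ⟨0, by omega⟩ ≠ l.get ⟨1, by omega⟩ := by
      intro h
      have := (List.Nodup.get_inj_iff hnd).1 h
      simp at this
    have pick : ∃ z, z ∈ l ∧ z ≠ x := by
      rcases eq_or_ne (l.get ⟨0, by omega⟩) x with rfl | hne
      · exact ⟨l.get ⟨1, by omega⟩, h1, fun h => hne01 h.symm⟩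
      · exact ⟨l.get ⟨0, by omega⟩, h0, hne⟩
    obtain ⟨z, hzl, hzx⟩ := pick
    have hxs : x ≤ s := le_of_lt (hbd x hx)
    have hzs : z ≤ s := le_of_lt (hbd z hzl)
    have hxz : X x z = cstruc l x z := hres x hxs z hzs
    have hzx' : X z x = cstruc l z x := hres z hzs x hxs
    rcases le_total (l.idxOf x) (l.idxOf z) with h | h
    · refine ⟨z, hzx, Or.inl ?_⟩
      rw [hxz, cstruc_iff]
      exact Or.inr ⟨hx, hzl, h⟩
    · refine ⟨z, hzx, Or.inr ?_⟩
      rw [hzx', cstruc_iff]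
      exact Or.inr ⟨hzl, hx, h⟩
  -- the new chain elements in the window
  set Snew : Finset ℕ := (Finset.range (u+1)).filter (fun x => x ∈ compSet X ∧ s < x)
    with hSnew
  have hSnew_mem : ∀ x, x ∈ Snew ↔ (x ≤ u ∧ x ∈ compSet X ∧ s < x) := by
    intro x
    simp only [hSnew, Finset.mem_filter, Finset.mem_range, Nat.lt_succ_iff]
  have hScs : ∀ x ∈ Snew, x ∈ compSet X := fun x hx => ((hSnew_mem x).1 hx).2.1
  obtain ⟨w', hnd', hmem', hpw'⟩ := exists_sorted_list (fun a b => X a b = true) Snew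
    (fun x hx y hy => htot x y (hScs x hx) (hScs y hy))
    (fun x _ y _ z _ h1 h2 => htrans x y z h1 h2)
  refine ⟨l ++ w', ⟨w', rfl⟩, ?_, ?_, ?_, ?_, ?_⟩
  · rw [List.nodup_append]
    refine ⟨hnd, hnd', fun a ha b hb hab => ?_⟩
    subst hab
    have h1 := hbd a ha
    have h2 := ((hSnew_mem a).1 ((hmem' a).1 hb)).2.2
    omega
  · rw [List.length_append]; omega
  · intro x hx
    rcases List.mem_append.1 hx with h | h
    · exact le_trans (le_of_lt (hbd x h)) hsu
    · exact ((hSnew_mem x).1 ((hmem' x).1 h)).1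
  · intro x
    rw [List.mem_append, hmem', hSnew_mem]
    constructor
    · rintro (h | h)
      · exact ⟨hl_mem_cs x h, le_trans (le_of_lt (hbd x h)) hsu⟩
      · exact ⟨h.2.1, h.1⟩
    · rintro ⟨hcs, hxu⟩
      rcases hcons x hcs with h | h
      · exact Or.inl h
      · exact Or.inr ⟨hxu, hcs, h.1⟩
  · -- the window formula
    -- first, the concatenated list is pairwise ordered by X
    have hpwl : List.Pairwise (fun a b => X a b = true) l := by
      rw [List.pairwise_iff_get]
      intro i j hij
      have hi := List.get_mem l i
      have hj := List.get_mem l j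
      rw [hres _ (le_of_lt (hbd _ hi)) _ (le_of_lt (hbd _ hj)), cstruc_iff]
      refine Or.inr ⟨hi, hj, ?_⟩
      rw [List.get_idxOf hnd, List.get_idxOf hnd]
      exact le_of_lt hij
    have hpww : List.Pairwise (fun a b => X a b = true) (l ++ w') := by
      rw [List.pairwise_append]
      refine ⟨hpwl, hpw', fun a ha b hb => ?_⟩
      have hbS := (hSnew_mem b).1 ((hmem' b).1 hb)
      rcases hcons b hbS.2.1 with h | h
      · have := hbd b h; omega
      · exact h.2 a ha
    have hwnd : (l ++ w').Nodup := by
      rw [List.nodup_append]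
      refine ⟨hnd, hnd', fun a ha b hb hab => ?_⟩
      subst hab
      have h1 := hbd a ha
      have h2 := ((hSnew_mem a).1 ((hmem' a).1 hb)).2.2
      omega
    have hmemw : ∀ x, x ∈ l ++ w' ↔ (x ∈ compSet X ∧ x ≤ u) := by
      intro x
      rw [List.mem_append, hmem', hSnew_mem]
      constructor
      · rintro (h | h)
        · exact ⟨hl_mem_cs x h, le_trans (le_of_lt (hbd x h)) hsu⟩
        · exact ⟨h.2.1, h.1⟩
      · rintro ⟨hcs, hxu⟩
        rcases hcons x hcs with h | h
        · exact Or.inl h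
        · exact Or.inr ⟨hxu, hcs, h.1⟩
    have hget : ∀ i j (hi : i < (l ++ w').length) (hj : j < (l ++ w').length), i < j →
        X ((l ++ w').get ⟨i, hi⟩) ((l ++ w').get ⟨j, hj⟩) = true := by
      intro i j hi hj hij
      exact List.pairwise_iff_get.1 hpww ⟨i, hi⟩ ⟨j, hj⟩ hij
    have hchar : ∀ a, a ∈ l ++ w' → ∀ b, b ∈ l ++ w' → a ≠ b →
        (X a b = true ↔ (l ++ w').idxOf a ≤ (l ++ w').idxOf b) := by
      intro a ha b hb hab
      have hia : (l ++ w').idxOf a < (l ++ w').length := List.idxOf_lt_length_iff.2 ha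
      have hib : (l ++ w').idxOf b < (l ++ w').length := List.idxOf_lt_length_iff.2 hb
      have hga : (l ++ w').get ⟨(l ++ w').idxOf a, hia⟩ = a := List.idxOf_get hia
      have hgb : (l ++ w').get ⟨(l ++ w').idxOf b, hib⟩ = b := List.idxOf_get hib
      have hidx_ne : (l ++ w').idxOf a ≠ (l ++ w').idxOf b := by
        intro h
        apply hab
        rw [← hga, ← hgb]
        congr 1
        exact Fin.ext h
      constructor
      · intro hX
        by_contra hlt
        push_neg at hlt
        have : X b a = true := by
          have := hget _ _ hib hia hlt
          rwa [hga, hgb] at this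
        exact hab (hanti a b hX this)
      · intro hle
        have hlt : (l ++ w').idxOf a < (l ++ w').idxOf b := lt_of_le_of_ne hle hidx_ne
        have := hget _ _ hia hib hlt
        rwa [hga, hgb] at this
    intro x hxu y hyu
    apply beq
    rcases eq_or_ne x y with rfl | hxy
    · rw [cstruc_refl]
      simp [hrefl x]
    by_cases hxw : x ∈ l ++ w' <;> by_cases hyw : y ∈ l ++ w'
    · rw [cstruc_iff, hchar x hxw y hyw hxy]
      constructor
      · intro h; exact Or.inr ⟨hxw, hyw, h⟩
      · rintro (h | h)
        · exact absurd h hxy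
        · exact h.2.2
    · constructor
      · intro hX
        exfalso
        apply hyw
        rw [hmemw]
        exact ⟨⟨x, hxy, Or.inr hX⟩, hyu⟩
      · intro hc
        rcases (cstruc_iff _ _ _).1 hc with h | h
        · exact absurd h hxy
        · exact absurd h.2.1 hyw
    · constructor
      · intro hX
        exfalso
        apply hxw
        rw [hmemw]
        exact ⟨⟨y, Ne.symm hxy, Or.inl hX⟩, hxu⟩
      · intro hc
        rcases (cstruc_iff _ _ _).1 hc with h | h
        · exact absurd h hxy
        · exact absurd h.1 hxw
    · constructor
      · intro hX
        exfalso
        apply hxw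
        rw [hmemw]
        exact ⟨⟨y, Ne.symm hxy, Or.inl hX⟩, hxu⟩
      · intro hc
        rcases (cstruc_iff _ _ _).1 hc with h | h
        · exact absurd h hxy
        · exact absurd h.1 hxw

lemma list_compl_infinite (w : List ℕ) : {x : ℕ | x ∉ w}.Infinite := by
  have hfin : {x : ℕ | x ∈ w}.Finite := w.finite_toSet
  have := hfin.infinite_compl
  exact this

lemma cstruc_isom_chain {w : List ℕ} (hnd : w.Nodup) (hlen : 2 ≤ w.length) :
    Isom (cstruc w) (tildeChain w.length) := by
  apply master_iso (K := {x | x ∈ w}) (K' := {x | x < w.length})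
    (p := fun x => w.idxOf x) (p' := fun x => x) (φ := fun x => w.idxOf x)
  · intro x y
    rw [cstruc_iff]
    simp only [Set.mem_setOf_eq]
  · intro x y
    rw [tildeChain_iff]
    simp only [Set.mem_setOf_eq]
    omega
  · intro x hx
    simp only [Set.mem_setOf_eq] at *
    exact List.idxOf_lt_length_iff.2 hx
  · intro x hx y hy hxy
    simp only [Set.mem_setOf_eq] at hx hy
    have hia : w.idxOf x < w.length := List.idxOf_lt_length_iff.2 hx
    have hib : w.idxOf y < w.length := List.idxOf_lt_length_iff.2 hy
    have h1 : w.get ⟨w.idxOf x, hia⟩ = x := List.idxOf_get hia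
    have h2 : w.get ⟨w.idxOf y, hib⟩ = y := List.idxOf_get hib
    rw [← h1, ← h2]
    congr 1
    exact Fin.ext hxy
  · intro v hv
    simp only [Set.mem_setOf_eq] at hv
    refine ⟨w.get ⟨v, hv⟩, List.get_mem _ _, ?_⟩
    rw [List.get_idxOf hnd]
  · intro x _ y _
    exact Iff.rfl
  · exact list_compl_infinite w
  · exact compl_lt_infinite w.length

lemma LD_cstruc {w : List ℕ} (hnd : w.Nodup) (hlen : 2 ≤ w.length) :
    cstruc w ∈ LD Fstar := by
  refine ⟨w.length, ?_⟩
  rw [fstar_two_le w.length hlen]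
  exact cstruc_isom_chain hnd hlen

/-- Fresh padding elements above the window. -/
def pads (s k : ℕ) : List ℕ := (List.range k).map (fun i => s + 1 + i)

lemma pads_mem {s k x : ℕ} : x ∈ pads s k ↔ (s < x ∧ x < s + 1 + k) := by
  simp only [pads, List.mem_map, List.mem_range]
  constructor
  · rintro ⟨i, hi, rfl⟩; omega
  · intro h; exact ⟨x - (s+1), by omega, by omega⟩

lemma pads_nodup (s k : ℕ) : (pads s k).Nodup := by
  apply List.Nodup.map
  · intro a b hab; simp only [] at hab; omega
  · exact List.nodup_range

lemma pads_length (s k : ℕ) : (pads s k).length = k := by simp [pads]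

/-- The canonical completion of a condition, with `k` further chain elements on top. -/
lemma canonical_consUp {l : List ℕ} {s : ℕ} (hcond : Cond l s) (k : ℕ) :
    cstruc (l ++ pads s k) ∈ ConsUp l s ∧ (l ++ pads s k).Nodup ∧
      (l ++ pads s k).length = l.length + k := by
  obtain ⟨hnd, hlen, hbd⟩ := hcond
  have hndw : (l ++ pads s k).Nodup := by
    rw [List.nodup_append]
    refine ⟨hnd, pads_nodup s k, fun a ha b hb hab => ?_⟩
    subst hab
    have h1 := hbd a ha
    have h2 := (pads_mem.1 hb).1
    omega
  have hlenw : (l ++ pads s k).length = l.length + k := by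
    rw [List.length_append, pads_length]
  have hlen2 : 2 ≤ (l ++ pads s k).length := by omega
  refine ⟨⟨LD_cstruc hndw hlen2, ?_, ?_⟩, hndw, hlenw⟩
  · exact cstruc_restrEq (fun x hx => le_of_lt (hbd x hx)) (fun x hx => (pads_mem.1 hx).1)
  · intro x hx
    rw [compSet_cstruc hndw hlen2, Set.mem_setOf_eq, List.mem_append] at hx
    rcases hx with h | h
    · exact Or.inl h
    · refine Or.inr ⟨(pads_mem.1 h).1, fun z hz => ?_⟩
      rw [cstruc_iff]
      refine Or.inr ⟨List.mem_append.2 (Or.inl hz), List.mem_append.2 (Or.inr h), ?_⟩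
      have h1 : (l ++ pads s k).idxOf z = l.idxOf z := indexOf_prefix ⟨_, rfl⟩ hz
      have h2 : l.length ≤ (l ++ pads s k).idxOf x := by
        apply length_le_indexOf
        intro hc
        have := hbd x hc
        have := (pads_mem.1 h).1
        omega
      have h3 : l.idxOf z < l.length := List.idxOf_lt_length_iff.2 hz
      omega

/-- One forcing step. -/
lemma step_exists (Γ : Struc → ℕ → ℕ → ℕ) (hc : ContinuousOn Γ (LD Fstar)) (m₀ : ℕ)
    (hflex : ∀ l s J, Cond l s →
      ∃ X ∈ ConsUp l s, ∃ j, J ≤ j ∧ Γ X m₀ j ≠ Γ tildeOmega m₀ j)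
    {l : List ℕ} {s : ℕ} (hcond : Cond l s) (j : ℕ) :
    ∃ l' s' j', Cond l' s' ∧ l <+: l' ∧ s < s' ∧ j < j' ∧ l.length < l'.length ∧
      (∀ x ∈ l', x ∈ l ∨ s < x) ∧ restrEq (cstruc l') (cstruc l) s ∧
      (∀ W ∈ LD Fstar, restrEq W (cstruc l') s' → Γ W m₀ j' ≠ Γ tildeOmega m₀ j') := by
  obtain ⟨X, hXC, j', hj', hne⟩ := hflex l s (j+1) hcond
  have hXLD : X ∈ LD Fstar := hXC.1
  obtain ⟨t, ht⟩ := cont_loc Γ hc hXLD m₀ j'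
  set u := max t s with hu
  have hsu : s ≤ u := le_max_right t s
  obtain ⟨w, hpre, hwnd, hwlen, hwbd, hwmem, hwf⟩ := window_lemma hcond hXC hsu
  refine ⟨w ++ [u+1], u+2, j', ?_, ?_, by omega, by omega, ?_, ?_, ?_, ?_⟩
  · -- Cond
    refine ⟨?_, ?_, ?_⟩
    · rw [List.nodup_append]
      refine ⟨hwnd, List.nodup_singleton _, fun a ha b hb hab => ?_⟩
      subst hab
      have h1 := hwbd a ha
      have h2 : a = u + 1 := by simpa using hb
      omega
    · rw [List.length_append]; omega
    · intro x hx
      rcases List.mem_append.1 hx with h | h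
      · have := hwbd x h; omega
      · have : x = u + 1 := by simpa using h
        omega
  · exact hpre.trans ⟨[u+1], rfl⟩
  · have h1 : l.length ≤ w.length := hpre.length_le
    rw [List.length_append]
    simp only [List.length_singleton]
    omega
  · intro x hx
    rcases List.mem_append.1 hx with h | h
    · rcases (hwmem x).1 h with ⟨hcs, _⟩
      rcases hXC.2.2 x hcs with h' | h'
      · exact Or.inl h'
      · exact Or.inr h'.1
    · have : x = u + 1 := by simpa using h
      omega
  · -- restrEq to the old condition
    obtain ⟨ext, hw⟩ := hpre
    have hext : ∀ x ∈ ext ++ [u+1], s < x := by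
      intro x hx
      rcases List.mem_append.1 hx with h | h
      · have hxw : x ∈ w := by rw [← hw]; exact List.mem_append.2 (Or.inr h)
        have hxl : x ∉ l := by
          intro hc
          have hdisj := (List.nodup_append.1 (hw ▸ hwnd)).2.2
          exact hdisj x hc x h rfl
        rcases (hwmem x).1 hxw with ⟨hcs, _⟩
        rcases hXC.2.2 x hcs with h' | h'
        · exact absurd h' hxl
        · exact h'.1
      · have : x = u + 1 := by simpa using h
        omega
    have : w ++ [u+1] = l ++ (ext ++ [u+1]) := by rw [← hw, List.append_assoc]
    rw [this]
    exact cstruc_restrEq (fun x hx => le_of_lt (hcond.2.2 x hx)) hext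
  · -- the lock
    intro W hW hres'
    have hWX : restrEq W X t := by
      intro x hx y hy
      have hxu : x ≤ u := le_trans hx (le_max_left t s)
      have hyu : y ≤ u := le_trans hy (le_max_left t s)
      have h1 : W x y = cstruc (w ++ [u+1]) x y := hres' x (by omega) y (by omega)
      have h2 : cstruc (w ++ [u+1]) x y = cstruc w x y := by
        have := cstruc_restrEq (l := w) (ext := [u+1]) (s := u)
          (fun z hz => hwbd z hz) (fun z hz => by simp at hz; omega)
        exact this x hxu y hyu
      rw [h1, h2, ← hwf x hxu y hyu]
    rw [ht W hW hWX]
    exact hne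

/-- The key claim: some condition freezes column `m₀` to the value of `Γ` at `ω̃`. -/
lemma claim_up (Γ : Struc → ℕ → ℕ → ℕ) (hc : ContinuousOn Γ (LD Fstar))
    (hfwd : ∀ R ∈ LD Fstar, ∀ R' ∈ LD Fstar, Isom R R' → E3 (Γ R) (Γ R')) (m₀ : ℕ) :
    ∃ l s J, Cond l s ∧
      ∀ X ∈ ConsUp l s, ∀ j, J ≤ j → Γ X m₀ j = Γ tildeOmega m₀ j := by
  classical
  by_contra hcon
  push_neg at hcon
  have hflex : ∀ l s J, Cond l s →
      ∃ X ∈ ConsUp l s, ∃ j, J ≤ j ∧ Γ X m₀ j ≠ Γ tildeOmega m₀ j := by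
    intro l s J hcond
    obtain ⟨X, hX, j, hj, hne⟩ := hcon l s J hcond
    exact ⟨X, hX, j, hj, hne⟩
  -- the forcing sequence
  let D := List ℕ × ℕ × ℕ
  have hstep : ∀ d : D, Cond d.1 d.2.1 → ∃ d' : D,
      Cond d'.1 d'.2.1 ∧ d.1 <+: d'.1 ∧ d.2.1 < d'.2.1 ∧ d.2.2 < d'.2.2 ∧
      d.1.length < d'.1.length ∧ (∀ x ∈ d'.1, x ∈ d.1 ∨ d.2.1 < x) ∧
      restrEq (cstruc d'.1) (cstruc d.1) d.2.1 ∧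
      (∀ W ∈ LD Fstar, restrEq W (cstruc d'.1) d'.2.1 →
        Γ W m₀ d'.2.2 ≠ Γ tildeOmega m₀ d'.2.2) := by
    rintro ⟨l, s, j⟩ hcond
    obtain ⟨l', s', j', h1, h2, h3, h4, h5, h6, h7, h8⟩ :=
      step_exists Γ hc m₀ hflex hcond j
    exact ⟨(l', s', j'), h1, h2, h3, h4, h5, h6, h7, h8⟩
  let step : D → D := fun d =>
    if h : Cond d.1 d.2.1 then Classical.choose (hstep d h) else d
  let seq : ℕ → D := fun k => step^[k] ([0, 1], 2, 0)
  have hseq_succ : ∀ k, seq (k+1) = step (seq k) := by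
    intro k
    simp only [seq, Function.iterate_succ_apply']
  have hcond0 : Cond ([0,1] : List ℕ) 2 := by
    refine ⟨by simp, by simp, ?_⟩
    intro x hx
    simp only [List.mem_cons, List.mem_singleton] at hx
    rcases hx with rfl | hx
    · omega
    · simp at hx; omega
  have hinv : ∀ k, Cond (seq k).1 (seq k).2.1 := by
    intro k
    induction k with
    | zero => exact hcond0
    | succ k ih =>
      rw [hseq_succ]
      show Cond (step (seq k)).1 (step (seq k)).2.1
      simp only [step, dif_pos ih]
      exact (Classical.choose_spec (hstep (seq k) ih)).1
  have hconn : ∀ k, (seq k).1 <+: (seq (k+1)).1 ∧ (seq k).2.1 < (seq (k+1)).2.1 ∧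
      (seq k).2.2 < (seq (k+1)).2.2 ∧ (seq k).1.length < (seq (k+1)).1.length ∧
      (∀ x ∈ (seq (k+1)).1, x ∈ (seq k).1 ∨ (seq k).2.1 < x) ∧
      restrEq (cstruc (seq (k+1)).1) (cstruc (seq k).1) (seq k).2.1 ∧
      (∀ W ∈ LD Fstar, restrEq W (cstruc (seq (k+1)).1) (seq (k+1)).2.1 →
        Γ W m₀ (seq (k+1)).2.2 ≠ Γ tildeOmega m₀ (seq (k+1)).2.2) := by
    intro k
    rw [hseq_succ]
    show _ ∧ _
    have h := Classical.choose_spec (hstep (seq k) (hinv k))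
    simp only [step, dif_pos (hinv k)]
    exact ⟨h.2.1, h.2.2.1, h.2.2.2.1, h.2.2.2.2.1, h.2.2.2.2.2.1, h.2.2.2.2.2.2.1,
      h.2.2.2.2.2.2.2⟩
  -- monotone facts
  have hs_lt : ∀ k, (seq k).2.1 < (seq (k+1)).2.1 := fun k => (hconn k).2.1
  have hj_lt : ∀ k, (seq k).2.2 < (seq (k+1)).2.2 := fun k => (hconn k).2.2.1
  have hlen_lt : ∀ k, (seq k).1.length < (seq (k+1)).1.length :=
    fun k => (hconn k).2.2.2.1
  have hchain : ∀ k d, (seq k).2.1 ≤ (seq (k+d)).2.1 ∧ (seq k).1 <+: (seq (k+d)).1 ∧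
      restrEq (cstruc (seq (k+d)).1) (cstruc (seq k).1) (seq k).2.1 := by
    intro k d
    induction d with
    | zero => exact ⟨le_rfl, List.prefix_refl _, fun x _ y _ => rfl⟩
    | succ d ih =>
      obtain ⟨ihs, ihp, ihr⟩ := ih
      have hc := hconn (k+d)
      refine ⟨le_trans ihs (le_of_lt hc.2.1), ihp.trans hc.1, ?_⟩
      intro x hx y hy
      have h1 := hc.2.2.2.2.2.1 x (le_trans hx ihs) y (le_trans hy ihs)
      rw [show k + (d+1) = (k+d) + 1 from rfl, h1]
      exact ihr x hx y hy
  have hs_ge : ∀ k, k + 2 ≤ (seq k).2.1 := by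
    intro k
    induction k with
    | zero => exact le_rfl
    | succ k ih => have := hs_lt k; omega
  have hj_ge : ∀ k, k ≤ (seq k).2.2 := by
    intro k
    induction k with
    | zero => exact Nat.zero_le _
    | succ k ih => have := hj_lt k; omega
  have hlen_ge : ∀ k, k + 2 ≤ (seq k).1.length := by
    intro k
    induction k with
    | zero => exact le_rfl
    | succ k ih => have := hlen_lt k; omega
  -- the limit structure
  set A : Struc := fun x y => cstruc ((seq (max x y)).1) x y with hA
  have hstab : ∀ x y k, max x y ≤ k → cstruc ((seq k).1) x y = A x y := by
    intro x y k hk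
    have h := hchain (max x y) (k - max x y)
    rw [show max x y + (k - max x y) = k by omega] at h
    have hb := hs_ge (max x y)
    exact h.2.2 x (by omega) y (by omega)
  have hresA : ∀ k, restrEq A (cstruc ((seq k).1)) ((seq k).2.1) := by
    intro k x hx y hy
    have h1 : cstruc ((seq (max k (max x y))).1) x y = A x y :=
      hstab x y _ (le_max_right _ _)
    have h := hchain k (max k (max x y) - k)
    rw [show k + (max k (max x y) - k) = max k (max x y) by omega] at h
    have h2 : cstruc ((seq (max k (max x y))).1) x y = cstruc ((seq k).1) x y :=
      h.2.2 x hx y hy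
    rw [← h1, h2]
  have hmem_stable : ∀ k k', k ≤ k' → ∀ x ∈ (seq k).1,
      x ∈ (seq k').1 ∧ ((seq k').1).idxOf x = ((seq k).1).idxOf x := by
    intro k k' hkk x hx
    have h := hchain k (k' - k)
    rw [show k + (k' - k) = k' by omega] at h
    exact ⟨h.2.1.subset hx, indexOf_prefix h.2.1 hx⟩
  set KK : Set ℕ := {x | ∃ k, x ∈ (seq k).1} with hKK
  set pos : ℕ → ℕ := fun x =>
    if h : ∃ k, x ∈ (seq k).1 then ((seq (Classical.choose h)).1).idxOf x else 0
    with hposdef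
  have hpos : ∀ k, ∀ x ∈ (seq k).1, pos x = ((seq k).1).idxOf x := by
    intro k x hx
    have h : ∃ k, x ∈ (seq k).1 := ⟨k, hx⟩
    have hc := Classical.choose_spec h
    simp only [hposdef, dif_pos h]
    have h1 := hmem_stable (Classical.choose h) (max (Classical.choose h) k)
      (le_max_left _ _) x hc
    have h2 := hmem_stable k (max (Classical.choose h) k) (le_max_right _ _) x hx
    rw [← h1.2, h2.2]
  have hA_iff : ∀ x y, A x y = true ↔ (x = y ∨ (x ∈ KK ∧ y ∈ KK ∧ pos x ≤ pos y)) := by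
    intro x y
    constructor
    · intro h
      have h' := (cstruc_iff ((seq (max x y)).1) x y).1 h
      rcases h' with h' | ⟨h1, h2, h3⟩
      · exact Or.inl h'
      · refine Or.inr ⟨⟨_, h1⟩, ⟨_, h2⟩, ?_⟩
        rw [hpos _ x h1, hpos _ y h2]
        exact h3
    · rintro (rfl | ⟨⟨k1, h1⟩, ⟨k2, h2⟩, h3⟩)
      · exact cstruc_refl _ _
      · have hx := hmem_stable k1 (max (max k1 k2) (max x y))
          (le_trans (le_max_left _ _) (le_max_left _ _)) x h1
        have hy := hmem_stable k2 (max (max k1 k2) (max x y))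
          (le_trans (le_max_right _ _) (le_max_left _ _)) y h2
        have hgoal : cstruc ((seq (max (max k1 k2) (max x y))).1) x y = true := by
          rw [cstruc_iff]
          refine Or.inr ⟨hx.1, hy.1, ?_⟩
          rw [hx.2, hy.2, ← hpos k1 x h1, ← hpos k2 y h2]
          exact h3
        rw [← hstab x y _ (le_max_right _ _)]
        exact hgoal
  have hpos_inj : ∀ x ∈ KK, ∀ y ∈ KK, pos x = pos y → x = y := by
    rintro x ⟨k1, h1⟩ y ⟨k2, h2⟩ hp
    have hx := hmem_stable k1 (max k1 k2) (le_max_left _ _) x h1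
    have hy := hmem_stable k2 (max k1 k2) (le_max_right _ _) y h2
    have hidx : ((seq (max k1 k2)).1).idxOf x = ((seq (max k1 k2)).1).idxOf y := by
      rw [hx.2, hy.2, ← hpos k1 x h1, ← hpos k2 y h2, hp]
    have hia := List.idxOf_lt_length_iff.2 hx.1
    have hib := List.idxOf_lt_length_iff.2 hy.1
    rw [← List.idxOf_get hia, ← List.idxOf_get hib]
    congr 1
    exact Fin.ext hidx
  have hpos_surj : ∀ m : ℕ, ∃ x ∈ KK, pos x = m := by
    intro m
    have hlen := hlen_ge m
    have hm : m < ((seq m).1).length := by omega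
    refine ⟨(seq m).1.get ⟨m, hm⟩, ⟨m, List.get_mem _ _⟩, ?_⟩
    rw [hpos m _ (List.get_mem _ _)]
    exact List.get_idxOf (hinv m).1 _
  have hsk_not : ∀ k, (seq k).2.1 ∉ KK := by
    rintro k ⟨j, hj⟩
    rcases le_or_gt j k with h | h
    · have hb := (hinv j).2.2 _ hj
      have := (hchain j (k - j)).1
      rw [show j + (k-j) = k by omega] at this
      omega
    · have claim : ∀ d, (seq k).2.1 ∉ (seq (k + d)).1 := by
        intro d
        induction d with
        | zero =>
          intro hc
          have := (hinv k).2.2 _ hc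
          omega
        | succ d ih =>
          intro hc
          have hnew := (hconn (k+d)).2.2.2.2.1 _ hc
          rcases hnew with h' | h'
          · exact ih h'
          · have := (hchain k d).1
            omega
      have h2 := claim (j - k)
      rw [show k + (j-k) = j by omega] at h2
      exact h2 hj
  have hKc : {x | x ∉ KK}.Infinite := by
    refine Set.infinite_of_injective_forall_mem (f := fun k => (seq k).2.1) ?_ hsk_not
    exact (strictMono_nat_of_lt_succ hs_lt).injective
  have isoA : Isom A tildeOmega := by
    apply master_iso (K := KK) (K' := {x | Even x}) (p := pos) (p' := fun x => x)
      (φ := fun x => 2 * pos x)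
    · exact hA_iff
    · intro x y
      rw [tildeOmega_iff]
      simp only [Set.mem_setOf_eq]
    · intro x _
      simp only [Set.mem_setOf_eq]
      exact ⟨pos x, by omega⟩
    · intro x hx y hy h
      simp only [] at h
      exact hpos_inj x hx y hy (by omega)
    · rintro y hy
      simp only [Set.mem_setOf_eq] at hy
      obtain ⟨m, hm⟩ := hy
      obtain ⟨x, hx, hpx⟩ := hpos_surj m
      exact ⟨x, hx, by omega⟩
    · intro x _ y _
      constructor <;> intro <;> omega
    · exact hKc
    · refine Set.infinite_of_injective_forall_mem (f := fun k => 2*k+1) ?_ ?_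
      · intro a b hab; simp only [] at hab; omega
      · intro k
        simp only [Set.mem_setOf_eq]
        rintro ⟨m, hm⟩
        omega
  have hALD : A ∈ LD Fstar := ⟨0, isoA⟩
  have hE3 : E3 (Γ A) (Γ tildeOmega) := hfwd A hALD tildeOmega ⟨0, isom_refl _⟩ isoA
  obtain ⟨N, hN⟩ := hE3 m₀
  have hlock := (hconn N).2.2.2.2.2.2 A hALD (hresA (N+1))
  have hjN : N ≤ (seq (N+1)).2.2 := by
    have := hj_ge (N+1)
    omega
  exact hlock (hN _ hjN)

end Part2

/-- The family `F*` is PL-learnable but not `E₃`-learnable. -/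
theorem Fstar_pl_not_e3 :
    (∃ M : Struc → ℕ → Option ℕ, IsLearner M ∧ PLLearns Fstar M) ∧
    ¬ ∃ Γ : Struc → (ℕ → ℕ → ℕ), ContinuousOn Γ (LD Fstar) ∧
        ∀ R ∈ LD Fstar, ∀ R' ∈ LD Fstar, (Isom R R' ↔ E3 (Γ R) (Γ R')) := by
  constructor
  · exact ⟨Mlearn, Mlearn_isLearner, Mlearn_pl⟩
  · rintro ⟨Γ, hcont, hred⟩
    have homega_LD : tildeOmega ∈ LD Fstar := ⟨0, isom_refl _⟩
    have hstar_LD : tildeOmegaStar ∈ LD Fstar := ⟨1, isom_refl _⟩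
    have hfwd : ∀ R ∈ LD Fstar, ∀ R' ∈ LD Fstar, Isom R R' → E3 (Γ R) (Γ R') :=
      fun R hR R' hR' h => (hred R hR R' hR').1 h
    have hnE3 : ¬ E3 (Γ tildeOmega) (Γ tildeOmegaStar) := by
      intro h
      exact noniso_omega_star ((hred _ homega_LD _ hstar_LD).2 h)
    have hm₀ex : ∃ m₀, ¬ E0 (Γ tildeOmega m₀) (Γ tildeOmegaStar m₀) := by
      by_contra h
      push_neg at h
      exact hnE3 h
    obtain ⟨m₀, hm₀⟩ := hm₀ex
    obtain ⟨l₁, s₁, J₁, hcond₁, H₁⟩ := claim_up Γ hcont hfwd m₀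
    have htransp_cont : Continuous transp := by
      apply continuous_pi; intro x
      apply continuous_pi; intro y
      exact (continuous_apply x).comp (continuous_apply y)
    have hc' : ContinuousOn (fun R => Γ (transp R)) (LD Fstar) := by
      exact ContinuousOn.comp hcont htransp_cont.continuousOn
        (fun R hR => LD_transp hR)
    have hfwd' : ∀ R ∈ LD Fstar, ∀ R' ∈ LD Fstar, Isom R R' →
        E3 ((fun R => Γ (transp R)) R) ((fun R => Γ (transp R)) R') := by
      intro R hR R' hR' h
      exact hfwd _ (LD_transp hR) _ (LD_transp hR') (isom_transp h)
    obtain ⟨l₂, s₂, J₂, hcond₂, H₂⟩ := claim_up (fun R => Γ (transp R)) hc' hfwd' m₀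
    set RR := max l₁.length l₂.length with hRR
    obtain ⟨hX₁C, hnd₁, hlen₁⟩ := canonical_consUp hcond₁ (RR - l₁.length)
    obtain ⟨hX₂C, hnd₂, hlen₂⟩ := canonical_consUp hcond₂ (RR - l₂.length)
    set X₁ := cstruc (l₁ ++ pads s₁ (RR - l₁.length)) with hX₁
    set X₂ := cstruc (l₂ ++ pads s₂ (RR - l₂.length)) with hX₂
    have hRlen₁ : (l₁ ++ pads s₁ (RR - l₁.length)).length = RR := by
      rw [hlen₁]
      have : l₁.length ≤ RR := le_max_left _ _
      omega
    have hRlen₂ : (l₂ ++ pads s₂ (RR - l₂.length)).length = RR := by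
      rw [hlen₂]
      have : l₂.length ≤ RR := le_max_right _ _
      omega
    have hRR2 : 2 ≤ RR := le_trans hcond₁.2.1 (le_max_left _ _)
    have hiso₁ : Isom X₁ (tildeChain RR) := by
      have := cstruc_isom_chain hnd₁ (by rw [hRlen₁]; exact hRR2)
      rwa [hRlen₁] at this
    have hiso₂ : Isom X₂ (tildeChain RR) := by
      have := cstruc_isom_chain hnd₂ (by rw [hRlen₂]; exact hRR2)
      rwa [hRlen₂] at this
    have hY : Isom X₁ (transp X₂) := by
      have h1 : Isom (transp X₂) (tildeChain RR) :=
        isom_trans (isom_transp hiso₂) (isom_transp_chain RR)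
      exact isom_trans hiso₁ (isom_symm h1)
    have hX₁LD : X₁ ∈ LD Fstar := hX₁C.1
    have hX₂LD : X₂ ∈ LD Fstar := hX₂C.1
    have hYLD : transp X₂ ∈ LD Fstar := LD_transp hX₂LD
    have hE3' : E3 (Γ X₁) (Γ (transp X₂)) := hfwd _ hX₁LD _ hYLD hY
    obtain ⟨N, hN⟩ := hE3' m₀
    apply hm₀
    refine ⟨max N (max J₁ J₂), fun j hj => ?_⟩
    have hjN : N ≤ j := le_trans (le_max_left _ _) hj
    have hjJ₁ : J₁ ≤ j := le_trans (le_trans (le_max_left _ _) (le_max_right _ _)) hj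
    have hjJ₂ : J₂ ≤ j := le_trans (le_trans (le_max_right _ _) (le_max_right _ _)) hj
    have e1 : Γ X₁ m₀ j = Γ tildeOmega m₀ j := H₁ X₁ hX₁C j hjJ₁
    have e2 : Γ (transp X₂) m₀ j = Γ (transp tildeOmega) m₀ j := H₂ X₂ hX₂C j hjJ₂
    have e3 : Γ X₁ m₀ j = Γ (transp X₂) m₀ j := hN j hjN
    calc Γ tildeOmega m₀ j = Γ X₁ m₀ j := e1.symm
    _ = Γ (transp X₂) m₀ j := e3
    _ = Γ (transp tildeOmega) m₀ j := e2
    _ = Γ tildeOmegaStar m₀ j := by rw [transp_tildeOmega]
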